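/- Let e ≥ 2, r = 3, u ∈ {2,3}, with D^u as above, and identify each N ∈ D^u with the 3-multipartition Pt(0,N). Then the following dominance relations hold: (i) α^u_k ⊳ α^u_{k+1} for 1 ≤ k ≤ y and β^u_l ⊳ β^u_{l+1} for 1 ≤ l ≤ z; (ii) if i_k < j_l then α^u_k ⊳ β^u_l, and if j_l < i_k then β^u_l ⊳ α^u_k; (iii) γ^u_{k,l+1} ⊳ γ^u_{k,l} ⊳ γ^u_{k+1,l}, and if γ^u_{k,l} ⊵ γ^u_{k′,l′} then k ≤ k′; (iv) if γ^u_{k,l} ⊳ α^u_v then k ≤ v, and if α^u_v ⊳ γ^u_{k,l} then v ≤ k; (v) if γ^u_{k,l} ⊳ α^u_k then i_k < j_l, and if α^u_k ⊳ γ^u_{k,l} then j_l < i_k; (vi) if γ^u_{k,l} ⊳ β^u_w then i_k < j_w, and if β^u_w ⊳ γ^u_{k,l} then j_w < i_k. -/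

import Mathlib

open scoped Classical

namespace AK
noncomputable section



/-! ### Matrices, order from base tuple, abacus β-sets -/

/-- The order ≺ on columns determined by a base tuple `B`. -/
def prec {e : ℕ} (B : Fin e → ℕ) (i j : Fin e) : Prop :=
  B i < B j ∨ (B i = B j ∧ i < j)

/-- `rank B i = π(B)⁻¹(i)`, the number of columns ≺-smaller than `i`. -/
def rank {e : ℕ} (B : Fin e → ℕ) (i : Fin e) : Fin e :=
  ⟨(Finset.univ.filter (fun j => prec B j i)).card, by
    have h1 : (Finset.univ.filter (fun j => prec B j i)) ⊆ Finset.univ.erase i := by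
      intro j hj
      rw [Finset.mem_filter] at hj
      refine Finset.mem_erase.mpr ⟨?_, Finset.mem_univ j⟩
      rintro rfl
      rcases hj.2 with h | ⟨-, h⟩ <;> exact lt_irrefl _ h
    have h2 := Finset.card_le_card h1
    have h3 : (Finset.univ.erase i).card < Finset.univ.card :=
      Finset.card_erase_lt_of_mem (Finset.mem_univ i)
    simpa using lt_of_le_of_lt h2 h3⟩

/-- The number of beads on runner `i` of the abacus of component `s` of `Pt(B,M)`. -/
def beads {e r : ℕ} (B : Fin e → ℕ) (M : Fin r → Fin e → Bool) (s : Fin r) (i : Fin e) : ℕ :=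
  B i + (if M s (rank B i) then 1 else 0)

/-- The canonical β-set of component `s` of `Pt(B,M)`. -/
def Tset {e r : ℕ} (B : Fin e → ℕ) (M : Fin r → Fin e → Bool) (s : Fin r) : Set ℤ :=
  {z | z < 0 ∨ (0 ≤ z ∧ ∃ h : z.toNat % e < e, z.toNat / e < beads B M s ⟨z.toNat % e, h⟩)}

/-- `n_s`, the total number of beads of component `s`. -/
def nsum {e r : ℕ} (B : Fin e → ℕ) (M : Fin r → Fin e → Bool) (s : Fin r) : ℕ :=
  ∑ i : Fin e, beads B M s i

/-- Decreasing enumeration of a set of integers: `tEnum T x` is `t_{x+1}`. -/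
noncomputable def tEnum (T : Set ℤ) : ℕ → ℤ
  | 0 => sSup T
  | (x + 1) => sSup (T ∩ Set.Iio (tEnum T x))

/-- The multipartition `Pt(B,M)`: component `s`, part `p+1` (0-indexed parts). -/
noncomputable def PtPart {e r : ℕ} (B : Fin e → ℕ) (M : Fin r → Fin e → Bool)
    (s : Fin r) (p : ℕ) : ℕ :=
  (tEnum (Tset B M s) p + (p + 1) - (nsum B M s : ℤ)).toNat

/-- The multicharge of `Pt(B,M)`. -/
noncomputable def PtCharge {e r : ℕ} (B : Fin e → ℕ) (M : Fin r → Fin e → Bool)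
    (s : Fin r) : ZMod e :=
  (nsum B M s : ZMod e)

/-! ### Nodes, good nodes and Kleshchev multipartitions -/

/-- A node `(s, x, y)` (all 0-indexed). -/
abbrev Node (r : ℕ) := Fin r × ℕ × ℕ

/-- `A` is above `B`. -/
def NodeAbove {r : ℕ} (A B : Node r) : Prop :=
  A.1 < B.1 ∨ (A.1 = B.1 ∧ A.2.1 < B.2.1)

/-- The residue of a node. -/
def res {e r : ℕ} (a : Fin r → ZMod e) (A : Node r) : ZMod e :=
  a A.1 - (A.2.1 : ZMod e) + (A.2.2 : ZMod e)

/-- `A` is a removable node of `lam`. -/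
def Removable {r : ℕ} (lam : Fin r → ℕ → ℕ) (A : Node r) : Prop :=
  A.2.2 + 1 = lam A.1 A.2.1 ∧ lam A.1 (A.2.1 + 1) < lam A.1 A.2.1

/-- `A` is an addable node of `lam`. -/
def Addable {r : ℕ} (lam : Fin r → ℕ → ℕ) (A : Node r) : Prop :=
  A.2.2 = lam A.1 A.2.1 ∧ (A.2.1 = 0 ∨ lam A.1 A.2.1 < lam A.1 (A.2.1 - 1))

/-- `A` is a normal node of `lam`. -/
def Normal {e r : ℕ} (a : Fin r → ZMod e) (lam : Fin r → ℕ → ℕ) (A : Node r) : Prop :=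
  Removable lam A ∧
    ∀ B : Node r, Addable lam B → res a B = res a A → NodeAbove A B →
      Set.ncard {C : Node r | Addable lam C ∧ res a C = res a A ∧ NodeAbove A C ∧ NodeAbove C B}
        < Set.ncard {C : Node r | Removable lam C ∧ res a C = res a A ∧ NodeAbove A C ∧ NodeAbove C B}

/-- `A` is a good node of `lam`: normal, and highest among normal nodes of its residue. -/
def Good {e r : ℕ} (a : Fin r → ZMod e) (lam : Fin r → ℕ → ℕ) (A : Node r) : Prop :=
  Normal a lam A ∧ ∀ B : Node r, Normal a lam B → res a B = res a A → B ≠ A → NodeAbove A B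

/-- Remove the node `A` from `lam`. -/
def removeNode {r : ℕ} (lam : Fin r → ℕ → ℕ) (A : Node r) : Fin r → ℕ → ℕ :=
  fun s x => if s = A.1 ∧ x = A.2.1 then lam s x - 1 else lam s x

/-- Kleshchev multipartitions (for the multicharge `a`). -/
inductive IsKleshchev {e r : ℕ} (a : Fin r → ZMod e) : (Fin r → ℕ → ℕ) → Prop
  | empty : IsKleshchev a (fun _ _ => 0)
  | step (lam : Fin r → ℕ → ℕ) (A : Node r) (hA : Good a lam A)
      (h : IsKleshchev a (removeNode lam A)) : IsKleshchev a lam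

/-! ### Weights and bead swaps -/

/-- `δ₊^M(t,s)`. -/
def deltaP {e r : ℕ} (M : Fin r → Fin e → Bool) (t s : Fin r) : ℕ :=
  (Finset.univ.filter (fun i => M t i = true ∧ M s i = false)).card

/-- `wt^M(t,s)`. -/
def wtPair {e r : ℕ} (M : Fin r → Fin e → Bool) (t s : Fin r) : ℕ :=
  min (deltaP M t s) (deltaP M s t)

/-- `wt(M)`. -/
def wtM {e r : ℕ} (M : Fin r → Fin e → Bool) : ℕ :=
  ∑ t : Fin r, ∑ s ∈ Finset.univ.filter (· < t), wtPair M t s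

/-- `M'` is obtained from `M` by a bead swap. -/
def BeadSwap {e r : ℕ} (M M' : Fin r → Fin e → Bool) : Prop :=
  ∃ i j : Fin e, i ≠ j ∧ ∃ s t : Fin r, s ≠ t ∧
    M s i = true ∧ M t j = true ∧ M s j = false ∧ M t i = false ∧
    M' s i = false ∧ M' t j = false ∧ M' s j = true ∧ M' t i = true ∧
    (∀ s' i', (s' ≠ s ∧ s' ≠ t) ∨ (i' ≠ i ∧ i' ≠ j) → M' s' i' = M s' i')




/-! ### The families `α^u_k`, `β^u_l`, `γ^u_{kl}` for `r = 3` -/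

def xcol : Fin 6 → Fin 3 → Bool := fun _ => ![false, false, false]

def ycol : Fin 6 → Fin 3 → Bool :=
  ![![false,true,true], ![true,false,false], ![true,true,false],
    ![false,false,true], ![false,true,true], ![true,false,false]]

def zcol : Fin 6 → Fin 3 → Bool :=
  ![![false,false,true], ![true,false,true], ![false,true,false],
    ![true,false,true], ![false,true,false], ![true,true,false]]

def oycol : Fin 6 → Fin 3 → Bool :=
  ![![true,false,true], ![false,false,true], ![false,true,true],
    ![true,false,false], ![true,true,false], ![false,true,false]]

def ozcol : Fin 6 → Fin 3 → Bool :=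
  ![![false,true,false], ![true,true,false], ![true,false,false],
    ![false,true,true], ![false,false,true], ![true,false,true]]

def aacol : Fin 6 → Fin 3 → Bool :=
  ![![true,true,false], ![false,true,false], ![true,false,true],
    ![false,true,false], ![true,false,true], ![false,false,true]]

def abcol : Fin 6 → Fin 3 → Bool :=
  ![![true,false,false], ![false,true,true], ![false,false,true],
    ![true,true,false], ![true,false,false], ![false,true,true]]

variable {e : ℕ}

/-- The matrix `α^u_k`. -/
def alphaM (Y Z : Finset (Fin e)) {y : ℕ} (hY : Y.card = y + 1) (u : Fin 6)
    (k : Fin (y + 1)) : Fin 3 → Fin e → Bool :=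
  fun s c =>
    if c = Y.orderEmbOfFin hY k then aacol u s
    else if c ∈ Y then ycol u s
    else if c ∈ Z then zcol u s
    else false

/-- The matrix `β^u_l`. -/
def betaM (Y Z : Finset (Fin e)) {z : ℕ} (hZ : Z.card = z + 1) (u : Fin 6)
    (l : Fin (z + 1)) : Fin 3 → Fin e → Bool :=
  fun s c =>
    if c = Z.orderEmbOfFin hZ l then abcol u s
    else if c ∈ Z then zcol u s
    else if c ∈ Y then ycol u s
    else false

/-- The matrix `γ^u_{kl}`. -/
def gammaM (Y Z : Finset (Fin e)) {y z : ℕ} (hY : Y.card = y + 1) (hZ : Z.card = z + 1)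
    (u : Fin 6) (k : Fin (y + 1)) (l : Fin (z + 1)) : Fin 3 → Fin e → Bool :=
  fun s c =>
    if c = Y.orderEmbOfFin hY k then oycol u s
    else if c = Z.orderEmbOfFin hZ l then ozcol u s
    else if c ∈ Y then ycol u s
    else if c ∈ Z then zcol u s
    else false

/-- The set `D^u` of matrices in the block. -/
def Duset (Y Z : Finset (Fin e)) {y z : ℕ} (hY : Y.card = y + 1) (hZ : Z.card = z + 1)
    (u : Fin 6) : Set (Fin 3 → Fin e → Bool) :=
  {A | (∃ k, A = alphaM Y Z hY u k) ∨ (∃ l, A = betaM Y Z hZ u l) ∨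
       (∃ k l, A = gammaM Y Z hY hZ u k l)}


/-! ### The dominance order on multipartitions -/

/-- The size of a partition. -/
def psize (f : ℕ → ℕ) : ℕ := ∑ᶠ x, f x

/-- The dominance order `μ ⊵ λ` on multipartitions. -/
def Dom {r : ℕ} (mu lam : Fin r → ℕ → ℕ) : Prop :=
  ∀ (t : Fin r) (z : ℕ),
    (∑ s ∈ Finset.univ.filter (· < t), psize (lam s)) + (∑ x ∈ Finset.range z, lam t x) ≤
    (∑ s ∈ Finset.univ.filter (· < t), psize (mu s)) + (∑ x ∈ Finset.range z, mu t x)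

/-- Strict dominance `μ ⊳ λ`. -/
def SDom {r : ℕ} (mu lam : Fin r → ℕ → ℕ) : Prop :=
  Dom mu lam ∧ mu ≠ lam

/-- The multipartition `Pt(0,M)`. -/
def Pt0 {e r : ℕ} (M : Fin r → Fin e → Bool) : Fin r → ℕ → ℕ :=
  PtPart (fun _ => 0) M


/-! ### Auxiliary development: foundations -/

section Foundations

variable {e r : ℕ}

/-- Columns where row `s` of `M` has a bead. -/
def rowSet (M : Fin r → Fin e → Bool) (s : Fin r) : Finset (Fin e) :=
  Finset.univ.filter (fun i => M s i = true)

lemma mem_rowSet {M : Fin r → Fin e → Bool} {s : Fin r} {i : Fin e} :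
    i ∈ rowSet M s ↔ M s i = true := by simp [rowSet]

lemma rank_zero (i : Fin e) : rank (fun _ => 0) i = i := by
  apply Fin.ext
  show (Finset.univ.filter fun j => prec (fun _ => (0:ℕ)) j i).card = i
  have h : (Finset.univ.filter fun j => prec (fun _ => (0:ℕ)) j i) = Finset.Iio i := by
    ext j; simp [prec, Finset.mem_Iio]
  rw [h, Fin.card_Iio]

lemma beads_zero (M : Fin r → Fin e → Bool) (s : Fin r) (i : Fin e) :
    beads (fun _ => 0) M s i = if M s i then 1 else 0 := by
  simp [beads, rank_zero]

lemma nsum_zero (M : Fin r → Fin e → Bool) (s : Fin r) :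
    nsum (fun _ => 0) M s = (rowSet M s).card := by
  classical
  simp only [nsum, beads_zero, rowSet]
  rw [Finset.card_filter]


/-- Recursive decreasing enumeration of `S` followed by the negative integers. -/
def dexc (S : Finset (Fin e)) (x : ℕ) : ℤ :=
  if h : S.Nonempty then
    match x with
    | 0 => ((S.max' h : Fin e) : ℕ)
    | x + 1 => dexc (S.erase (S.max' h)) x
  else -(x + 1)
termination_by S.card
decreasing_by exact Finset.card_erase_lt_of_mem (S.max'_mem h)

lemma dexc_empty (x : ℕ) : dexc (∅ : Finset (Fin e)) x = -(x + 1) := by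
  rw [dexc]; simp

lemma dexc_zero (S : Finset (Fin e)) (h : S.Nonempty) :
    dexc S 0 = ((S.max' h : Fin e) : ℕ) := by rw [dexc]; simp [h]

lemma dexc_succ (S : Finset (Fin e)) (h : S.Nonempty) (x : ℕ) :
    dexc S (x + 1) = dexc (S.erase (S.max' h)) x := by rw [dexc]; simp [h]

lemma dexc_lt_of_forall_lt {c : ℤ} (hc : 0 ≤ c) :
    ∀ S : Finset (Fin e), (∀ a ∈ S, ((a : ℕ) : ℤ) < c) → ∀ x, dexc S x < c := by
  intro S
  induction S using Finset.strongInductionOn with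
  | _ S ih =>
    intro hS x
    rcases S.eq_empty_or_nonempty with rfl | h
    · rw [dexc_empty]; push_cast; omega
    · cases x with
      | zero => rw [dexc_zero S h]; exact hS _ (S.max'_mem h)
      | succ x =>
        rw [dexc_succ S h]
        exact ih _ (Finset.erase_ssubset (S.max'_mem h))
          (fun a ha => hS a (Finset.mem_of_mem_erase ha)) x

lemma dexc_succ_lt : ∀ (S : Finset (Fin e)) (x : ℕ), dexc S (x + 1) < dexc S x := by
  intro S
  induction S using Finset.strongInductionOn with
  | _ S ih =>
    intro x
    rcases S.eq_empty_or_nonempty with rfl | h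
    · rw [dexc_empty, dexc_empty]; push_cast; omega
    · cases x with
      | zero =>
        rw [dexc_succ S h, dexc_zero S h]
        refine dexc_lt_of_forall_lt (by positivity) _ (fun a ha => ?_) 0
        exact_mod_cast Fin.lt_def.mp (Finset.lt_max'_of_mem_erase_max' S h ha)
      | succ x =>
        rw [dexc_succ S h, dexc_succ S h]
        exact ih _ (Finset.erase_ssubset (S.max'_mem h)) x

lemma dexc_strictAnti (S : Finset (Fin e)) : StrictAnti (dexc S) :=
  strictAnti_nat_of_succ_lt (dexc_succ_lt S)

lemma dexc_of_card_le :
    ∀ (S : Finset (Fin e)) (x : ℕ), S.card ≤ x → dexc S x = (S.card : ℤ) - 1 - x := by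
  intro S
  induction S using Finset.strongInductionOn with
  | _ S ih =>
    intro x hx
    rcases S.eq_empty_or_nonempty with rfl | h
    · rw [dexc_empty]; simp; push_cast; ring
    · have h1 : 1 ≤ S.card := Finset.card_pos.mpr h
      cases x with
      | zero => omega
      | succ x =>
        rw [dexc_succ S h, ih _ (Finset.erase_ssubset (S.max'_mem h)) x
          (by rw [Finset.card_erase_of_mem (S.max'_mem h)]; omega)]
        rw [Finset.card_erase_of_mem (S.max'_mem h)]
        push_cast [h1]
        ring

lemma card_le_max'_add_one (S : Finset (Fin e)) (h : S.Nonempty) :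
    S.card ≤ (S.max' h : ℕ) + 1 := by
  calc S.card = (S.image Fin.val).card :=
        (Finset.card_image_of_injective _ Fin.val_injective).symm
    _ ≤ (Finset.Iic ((S.max' h : Fin e) : ℕ)).card := by
        apply Finset.card_le_card
        intro m hm
        simp only [Finset.mem_image] at hm
        obtain ⟨a, ha, rfl⟩ := hm
        exact Finset.mem_Iic.mpr (S.le_max' a ha)
    _ = (S.max' h : ℕ) + 1 := by rw [Nat.card_Iic]

lemma le_dexc :
    ∀ (S : Finset (Fin e)) (x : ℕ), x < S.card → (S.card : ℤ) - 1 - x ≤ dexc S x := by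
  intro S
  induction S using Finset.strongInductionOn with
  | _ S ih =>
    intro x hx
    have h : S.Nonempty := Finset.card_pos.mp (by omega)
    cases x with
    | zero =>
      rw [dexc_zero S h]
      have := card_le_max'_add_one S h
      push_cast
      omega
    | succ x =>
      rw [dexc_succ S h]
      have hc := Finset.card_erase_of_mem (S.max'_mem h)
      have hx' : x < (S.erase (S.max' h)).card := by omega
      have := ih _ (Finset.erase_ssubset (S.max'_mem h)) x hx'
      rw [hc] at this
      have h1 : 1 ≤ S.card := Finset.card_pos.mpr h
      push_cast [h1] at this ⊢
      omega

lemma dexc_nonneg (S : Finset (Fin e)) (x : ℕ) (hx : x < S.card) : 0 ≤ dexc S x := by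
  have := le_dexc S x hx
  omega

lemma range_dexc :
    ∀ S : Finset (Fin e),
      Set.range (dexc S) = {w : ℤ | w < 0 ∨ ∃ a ∈ S, ((a : ℕ) : ℤ) = w} := by
  intro S
  induction S using Finset.strongInductionOn with
  | _ S ih =>
    rcases S.eq_empty_or_nonempty with rfl | h
    · ext w
      simp only [Set.mem_range, dexc_empty, Set.mem_setOf_eq, Finset.notMem_empty,
        false_and, exists_false, or_false]
      constructor
      · rintro ⟨x, rfl⟩; push_cast; omega
      · intro hw
        refine ⟨(-w - 1).toNat, ?_⟩
        have : ((-w - 1).toNat : ℤ) = -w - 1 := Int.toNat_of_nonneg (by omega)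
        omega
    · have hrec : Set.range (dexc S) =
          insert (((S.max' h : Fin e) : ℕ) : ℤ) (Set.range (dexc (S.erase (S.max' h)))) := by
        ext w
        constructor
        · rintro ⟨x, rfl⟩
          cases x with
          | zero => left; rw [dexc_zero S h]
          | succ x => right; exact ⟨x, (dexc_succ S h x).symm⟩
        · rintro (rfl | ⟨x, rfl⟩)
          · exact ⟨0, dexc_zero S h⟩
          · exact ⟨x + 1, dexc_succ S h x⟩
      rw [hrec, ih _ (Finset.erase_ssubset (S.max'_mem h))]
      ext w
      simp only [Set.mem_insert_iff, Set.mem_setOf_eq, Finset.mem_erase]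
      constructor
      · rintro (rfl | hw | ⟨a, ⟨-, ha⟩, rfl⟩)
        · exact Or.inr ⟨S.max' h, S.max'_mem h, rfl⟩
        · exact Or.inl hw
        · exact Or.inr ⟨a, ha, rfl⟩
      · rintro (hw | ⟨a, ha, rfl⟩)
        · exact Or.inr (Or.inl hw)
        · by_cases hmax : a = S.max' h
          · subst hmax; exact Or.inl rfl
          · exact Or.inr (Or.inr ⟨a, ⟨hmax, ha⟩, rfl⟩)

lemma tEnum_range {g : ℕ → ℤ} (hg : StrictAnti g) : ∀ x, tEnum (Set.range g) x = g x := by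
  intro x
  induction x with
  | zero =>
    show sSup _ = _
    exact IsGreatest.csSup_eq ⟨⟨0, rfl⟩, by rintro w ⟨y, rfl⟩; exact hg.antitone (Nat.zero_le y)⟩
  | succ x ih =>
    show sSup (Set.range g ∩ Set.Iio (tEnum (Set.range g) x)) = g (x + 1)
    rw [ih]
    apply IsGreatest.csSup_eq
    constructor
    · exact ⟨⟨x + 1, rfl⟩, hg (Nat.lt_succ_self x)⟩
    · rintro w ⟨⟨y, rfl⟩, hw⟩
      have hxy : x < y := by
        by_contra hxy
        push_neg at hxy
        exact absurd (hg.antitone hxy) (not_le.mpr hw)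
      exact hg.antitone hxy

lemma Tset_zero_eq (he : 0 < e) (M : Fin r → Fin e → Bool) (s : Fin r) :
    Tset (fun _ => 0) M s = Set.range (dexc (rowSet M s)) := by
  rw [range_dexc]
  ext w
  simp only [Tset, Set.mem_setOf_eq]
  constructor
  · rintro (hw | ⟨hw0, hmod, hdiv⟩)
    · exact Or.inl hw
    · right
      rw [beads_zero] at hdiv
      by_cases hM : M s ⟨w.toNat % e, hmod⟩
      · rw [if_pos hM] at hdiv
        have hlt : w.toNat < e := by
          have := (Nat.div_lt_iff_lt_mul he).mp hdiv
          omega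
        have hm : w.toNat % e = w.toNat := Nat.mod_eq_of_lt hlt
        refine ⟨⟨w.toNat % e, hmod⟩, mem_rowSet.mpr hM, ?_⟩
        show ((w.toNat % e : ℕ) : ℤ) = w
        rw [hm, Int.toNat_of_nonneg hw0]
      · rw [if_neg hM] at hdiv; exact absurd hdiv (Nat.not_lt_zero _)
  · rintro (hw | ⟨a, haM, rfl⟩)
    · exact Or.inl hw
    · right
      have h0 : (0 : ℤ) ≤ ((a : ℕ) : ℤ) := Int.natCast_nonneg _
      refine ⟨h0, ?_⟩
      have ht : ((a : ℕ) : ℤ).toNat = (a : ℕ) := Int.toNat_natCast _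
      have hmod : ((a : ℕ) : ℤ).toNat % e = (a : ℕ) := by
        rw [ht]; exact Nat.mod_eq_of_lt a.isLt
      refine ⟨by rw [hmod]; exact a.isLt, ?_⟩
      rw [beads_zero]
      have hfin : (⟨((a : ℕ) : ℤ).toNat % e, by rw [hmod]; exact a.isLt⟩ : Fin e) = a :=
        Fin.ext hmod
      rw [hfin, if_pos (mem_rowSet.mp haM)]
      rw [ht]
      exact (Nat.div_lt_iff_lt_mul he).mpr (by simpa using a.isLt)

end Foundations


/-! ### Auxiliary development: reduction of dominance to top-sums -/

section Reduction

variable {e r : ℕ}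

lemma tEnum_Tset (he : 0 < e) (M : Fin r → Fin e → Bool) (s : Fin r) (x : ℕ) :
    tEnum (Tset (fun _ => 0) M s) x = dexc (rowSet M s) x := by
  rw [Tset_zero_eq he M s, tEnum_range (dexc_strictAnti _)]

lemma Pt0_cast (he : 0 < e) (M : Fin r → Fin e → Bool) (s : Fin r) (p : ℕ)
    (hp : p < (rowSet M s).card) :
    (Pt0 M s p : ℤ) = dexc (rowSet M s) p + (p + 1) - ((rowSet M s).card : ℤ) := by
  have hge := le_dexc _ p hp
  rw [Pt0, PtPart, tEnum_Tset he, nsum_zero]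
  rw [Int.toNat_of_nonneg (by push_cast; omega)]

lemma Pt0_eq_zero (he : 0 < e) (M : Fin r → Fin e → Bool) (s : Fin r) (p : ℕ)
    (hp : (rowSet M s).card ≤ p) : Pt0 M s p = 0 := by
  rw [Pt0, PtPart, tEnum_Tset he, nsum_zero, dexc_of_card_le _ p hp]
  have h : ((rowSet M s).card : ℤ) - 1 - p + (p + 1) - ((rowSet M s).card : ℤ) = 0 := by
    push_cast; ring
  rw [h]
  rfl

/-- Sum of the `z` largest entries (as integers). -/
def TE (S : Finset (Fin e)) (zc : ℕ) : ℤ := ∑ x ∈ Finset.range zc, dexc S x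

/-- Sum of all entries of `S` (as integers). -/
def ssum (S : Finset (Fin e)) : ℤ := ∑ a ∈ S, ((a : ℕ) : ℤ)

lemma TE_zero (S : Finset (Fin e)) : TE S 0 = 0 := by simp [TE]

lemma TE_one (S : Finset (Fin e)) (h : S.Nonempty) : TE S 1 = ((S.max' h : ℕ) : ℤ) := by
  simp [TE, dexc_zero S h]

lemma TE_singleton (a : Fin e) : TE {a} 1 = ((a : ℕ) : ℤ) := by
  rw [TE_one {a} ⟨a, Finset.mem_singleton_self a⟩, Finset.max'_singleton]

lemma TE_succ_max (S : Finset (Fin e)) (h : S.Nonempty) (zc : ℕ) :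
    TE S (zc + 1) = ((S.max' h : ℕ) : ℤ) + TE (S.erase (S.max' h)) zc := by
  rw [TE, Finset.sum_range_succ', dexc_zero S h, add_comm]
  congr 1
  exact Finset.sum_congr rfl fun x _ => dexc_succ S h x

lemma TE_nonneg (S : Finset (Fin e)) (zc : ℕ) (hz : zc ≤ S.card) : 0 ≤ TE S zc :=
  Finset.sum_nonneg fun x hx =>
    dexc_nonneg _ _ (lt_of_lt_of_le (Finset.mem_range.mp hx) hz)

lemma ssum_nonneg (S : Finset (Fin e)) : 0 ≤ ssum S :=
  Finset.sum_nonneg fun a _ => Int.natCast_nonneg _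

lemma TE_card : ∀ S : Finset (Fin e), TE S S.card = ssum S := by
  intro S
  induction S using Finset.strongInductionOn with
  | _ S ih =>
    rcases S.eq_empty_or_nonempty with rfl | h
    · rw [Finset.card_empty, TE_zero]; simp [ssum]
    · have h1 : 1 ≤ S.card := Finset.card_pos.mpr h
      have hcard : S.card = (S.erase (S.max' h)).card + 1 := by
        rw [Finset.card_erase_of_mem (S.max'_mem h)]; omega
      rw [hcard, TE_succ_max S h, ih _ (Finset.erase_ssubset (S.max'_mem h))]
      simp only [ssum]
      exact Finset.add_sum_erase S (fun a => ((a : ℕ) : ℤ)) (S.max'_mem h)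

lemma sum_le_TE :
    ∀ (zc : ℕ) (S A : Finset (Fin e)), A ⊆ S → A.card ≤ zc → zc ≤ S.card →
      ssum A ≤ TE S zc := by
  intro zc
  induction zc with
  | zero =>
    intro S A hAS hA _
    rw [Finset.card_eq_zero.mp (Nat.le_zero.mp hA)]
    simp [ssum, TE]
  | succ zc ih =>
    intro S A hAS hA hz
    have hS : S.Nonempty := Finset.card_pos.mp (by omega)
    rcases A.eq_empty_or_nonempty with rfl | hA'
    · simpa [ssum] using TE_nonneg S _ hz
    · have haS : A.max' hA' ∈ S := hAS (A.max'_mem hA')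
      have hsub : A.erase (A.max' hA') ⊆ S.erase (S.max' hS) := by
        intro b hb
        obtain ⟨hba, hbA⟩ := Finset.mem_erase.mp hb
        refine Finset.mem_erase.mpr ⟨?_, hAS hbA⟩
        rintro rfl
        exact hba (le_antisymm (A.le_max' _ hbA) (S.le_max' _ haS))
      have hc1 : (A.erase (A.max' hA')).card ≤ zc := by
        rw [Finset.card_erase_of_mem (A.max'_mem hA')]; omega
      have hc2 : zc ≤ (S.erase (S.max' hS)).card := by
        rw [Finset.card_erase_of_mem (S.max'_mem hS)]; omega
      have h1 := ih _ _ hsub hc1 hc2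
      have hle : ((A.max' hA' : ℕ) : ℤ) ≤ ((S.max' hS : ℕ) : ℤ) := by
        exact_mod_cast S.le_max' _ haS
      calc ssum A = ((A.max' hA' : ℕ) : ℤ) + ssum (A.erase (A.max' hA')) :=
            (Finset.add_sum_erase A (fun a => ((a : ℕ) : ℤ)) (A.max'_mem hA')).symm
        _ ≤ ((S.max' hS : ℕ) : ℤ) + TE (S.erase (S.max' hS)) zc := add_le_add hle h1
        _ = TE S (zc + 1) := (TE_succ_max S hS zc).symm

lemma exists_subset_TE :
    ∀ (zc : ℕ) (S : Finset (Fin e)), zc ≤ S.card →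
      ∃ A : Finset (Fin e), A ⊆ S ∧ A.card = zc ∧ ssum A = TE S zc := by
  intro zc
  induction zc with
  | zero => intro S _; exact ⟨∅, Finset.empty_subset S, Finset.card_empty, by simp [ssum, TE]⟩
  | succ zc ih =>
    intro S hz
    have hS : S.Nonempty := Finset.card_pos.mp (by omega)
    obtain ⟨A', h1, h2, h3⟩ := ih (S.erase (S.max' hS))
      (by rw [Finset.card_erase_of_mem (S.max'_mem hS)]; omega)
    have hmax : S.max' hS ∉ A' := fun hmem => (Finset.mem_erase.mp (h1 hmem)).1 rfl
    refine ⟨insert (S.max' hS) A', ?_, ?_, ?_⟩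
    · exact Finset.insert_subset (S.max'_mem hS) (h1.trans (Finset.erase_subset _ _))
    · rw [Finset.card_insert_of_notMem hmax, h2]
    · rw [ssum, Finset.sum_insert hmax, TE_succ_max S hS zc, ← h3]; rfl

lemma TE_le_swap {S : Finset (Fin e)} {a b : Fin e} (ha : a ∈ S) (hb : b ∉ S) (hab : a ≤ b)
    (zc : ℕ) (hz : zc ≤ S.card) : TE S zc ≤ TE (insert b (S.erase a)) zc := by
  obtain ⟨A, hAS, hAc, hAsum⟩ := exists_subset_TE zc S hz
  have h1 : 1 ≤ S.card := Finset.card_pos.mpr ⟨a, ha⟩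
  have hcard' : (insert b (S.erase a)).card = S.card := by
    rw [Finset.card_insert_of_notMem (fun h => hb (Finset.mem_of_mem_erase h)),
      Finset.card_erase_of_mem ha]
    omega
  rw [← hAsum]
  by_cases hmem : a ∈ A
  · have hbA : b ∉ A.erase a := fun h => hb (hAS (Finset.mem_of_mem_erase h))
    have hsub : insert b (A.erase a) ⊆ insert b (S.erase a) :=
      Finset.insert_subset_insert _ (Finset.erase_subset_erase _ hAS)
    have hA1 : 1 ≤ A.card := Finset.card_pos.mpr ⟨a, hmem⟩
    have hc : (insert b (A.erase a)).card = zc := by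
      rw [Finset.card_insert_of_notMem hbA, Finset.card_erase_of_mem hmem]
      omega
    have hs : ssum A ≤ ssum (insert b (A.erase a)) := by
      simp only [ssum]
      rw [Finset.sum_insert hbA, ← Finset.add_sum_erase A (fun a => ((a : ℕ) : ℤ)) hmem]
      exact add_le_add_left (by exact_mod_cast hab) _
    exact hs.trans (sum_le_TE zc _ _ hsub (le_of_eq hc) (by omega))
  · have hsub : A ⊆ insert b (S.erase a) := fun c hc =>
      Finset.mem_insert_of_mem (Finset.mem_erase.mpr
        ⟨fun hca => hmem (hca ▸ hc), hAS hc⟩)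
    exact sum_le_TE zc _ _ hsub (le_of_eq hAc) (by omega)

lemma TE_swap_add {S : Finset (Fin e)} {a b : Fin e} (hb : b ∈ S) (ha : a ∉ S) (hab : a ≤ b)
    (zc : ℕ) (hz : zc ≤ S.card) :
    ((a : ℕ) : ℤ) + TE S zc ≤ ((b : ℕ) : ℤ) + TE (insert a (S.erase b)) zc := by
  obtain ⟨A, hAS, hAc, hAsum⟩ := exists_subset_TE zc S hz
  have h1 : 1 ≤ S.card := Finset.card_pos.mpr ⟨b, hb⟩
  have hcard' : (insert a (S.erase b)).card = S.card := by
    rw [Finset.card_insert_of_notMem (fun h => ha (Finset.mem_of_mem_erase h)),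
      Finset.card_erase_of_mem hb]
    omega
  rw [← hAsum]
  by_cases hmem : b ∈ A
  · have haA : a ∉ A.erase b := fun h => ha (hAS (Finset.mem_of_mem_erase h))
    have hsub : insert a (A.erase b) ⊆ insert a (S.erase b) :=
      Finset.insert_subset_insert _ (Finset.erase_subset_erase _ hAS)
    have hA1 : 1 ≤ A.card := Finset.card_pos.mpr ⟨b, hmem⟩
    have hc : (insert a (A.erase b)).card = zc := by
      rw [Finset.card_insert_of_notMem haA, Finset.card_erase_of_mem hmem]
      omega
    have hkey : ((a : ℕ) : ℤ) + ssum A = ((b : ℕ) : ℤ) + ssum (insert a (A.erase b)) := by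
      simp only [ssum]
      rw [Finset.sum_insert haA, ← Finset.add_sum_erase A (fun a => ((a : ℕ) : ℤ)) hmem]
      ring
    rw [hkey]
    exact add_le_add_right (sum_le_TE zc _ _ hsub (le_of_eq hc) (by omega)) _
  · have hsub : A ⊆ insert a (S.erase b) := fun c hc =>
      Finset.mem_insert_of_mem (Finset.mem_erase.mpr
        ⟨fun hcb => hmem (hcb ▸ hc), hAS hc⟩)
    have := sum_le_TE zc _ _ hsub (le_of_eq hAc) (by omega)
    have hle : ((a : ℕ) : ℤ) ≤ ((b : ℕ) : ℤ) := by exact_mod_cast hab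
    omega

end Reduction


/-! ### Dominance criterion via `GZ` -/

section DomCrit

variable {e : ℕ}

/-- The integer quantity controlling dominance: earlier component sums plus a top-sum. -/
def GZ (M : Fin 3 → Fin e → Bool) (t : Fin 3) (zc : ℕ) : ℤ :=
  (∑ s ∈ Finset.univ.filter (· < t), ssum (rowSet M s)) + TE (rowSet M t) zc

lemma prefix_cast (he : 0 < e) (M : Fin 3 → Fin e → Bool) (s : Fin 3) (zc : ℕ)
    (hzc : zc ≤ (rowSet M s).card) :
    ((∑ x ∈ Finset.range zc, Pt0 M s x : ℕ) : ℤ)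
      = TE (rowSet M s) zc
        + ∑ x ∈ Finset.range zc, ((x : ℤ) + 1 - ((rowSet M s).card : ℤ)) := by
  push_cast
  rw [TE, ← Finset.sum_add_distrib]
  exact Finset.sum_congr rfl fun x hx => by
    rw [Pt0_cast he M s x (lt_of_lt_of_le (Finset.mem_range.mp hx) hzc)]; ring

lemma psize_Pt0 (he : 0 < e) (M : Fin 3 → Fin e → Bool) (s : Fin 3) :
    psize (Pt0 M s) = ∑ x ∈ Finset.range (rowSet M s).card, Pt0 M s x := by
  rw [psize]
  apply finsum_eq_sum_of_support_subset
  intro x hx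
  simp only [Function.mem_support] at hx
  simp only [Finset.coe_range, Set.mem_Iio]
  by_contra h
  push_neg at h
  exact hx (Pt0_eq_zero he M s x h)

lemma prefix_trunc (he : 0 < e) (M : Fin 3 → Fin e → Bool) (s : Fin 3) (zc : ℕ) :
    ∑ x ∈ Finset.range zc, Pt0 M s x
      = ∑ x ∈ Finset.range (min zc (rowSet M s).card), Pt0 M s x := by
  refine (Finset.sum_subset ?_ ?_).symm
  · intro x hx
    simp only [Finset.mem_range] at hx ⊢
    omega
  · intro x hx hnx
    simp only [Finset.mem_range] at hx hnx
    exact Pt0_eq_zero he M s x (by omega)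

/-- The correction constant, depending only on the cards of the rows. -/
def corr (M : Fin 3 → Fin e → Bool) (t : Fin 3) (zc : ℕ) : ℤ :=
  (∑ s ∈ Finset.univ.filter (· < t),
      ∑ x ∈ Finset.range (rowSet M s).card, ((x : ℤ) + 1 - ((rowSet M s).card : ℤ)))
    + ∑ x ∈ Finset.range zc, ((x : ℤ) + 1 - ((rowSet M t).card : ℤ))

lemma dom_side_cast (he : 0 < e) (M : Fin 3 → Fin e → Bool) (t : Fin 3) (zc : ℕ)
    (hzc : zc ≤ (rowSet M t).card) :
    (((∑ s ∈ Finset.univ.filter (· < t), psize (Pt0 M s))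
        + ∑ x ∈ Finset.range zc, Pt0 M t x : ℕ) : ℤ)
      = GZ M t zc + corr M t zc := by
  push_cast
  rw [GZ, corr]
  have h1 : ∀ s : Fin 3, ((psize (Pt0 M s) : ℕ) : ℤ)
      = ssum (rowSet M s)
        + ∑ x ∈ Finset.range (rowSet M s).card, ((x : ℤ) + 1 - ((rowSet M s).card : ℤ)) := by
    intro s
    rw [psize_Pt0 he M s, prefix_cast he M s _ le_rfl, TE_card]
  calc (∑ s ∈ Finset.univ.filter (· < t), ((psize (Pt0 M s) : ℕ) : ℤ))
        + ∑ x ∈ Finset.range zc, ((Pt0 M t x : ℕ) : ℤ)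
      = (∑ s ∈ Finset.univ.filter (· < t),
          (ssum (rowSet M s)
            + ∑ x ∈ Finset.range (rowSet M s).card, ((x : ℤ) + 1 - ((rowSet M s).card : ℤ))))
        + (TE (rowSet M t) zc
            + ∑ x ∈ Finset.range zc, ((x : ℤ) + 1 - ((rowSet M t).card : ℤ))) := by
        rw [Finset.sum_congr rfl fun s _ => h1 s]
        congr 1
        rw [← prefix_cast he M t zc hzc]
        push_cast
        rfl
    _ = _ := by
        rw [Finset.sum_add_distrib]
        ring

lemma corr_eq {M M' : Fin 3 → Fin e → Bool}
    (hc : ∀ s, (rowSet M s).card = (rowSet M' s).card) (t : Fin 3) (zc : ℕ) :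
    corr M t zc = corr M' t zc := by
  simp only [corr, hc]

lemma GZ_le_of_Dom (he : 0 < e) {M M' : Fin 3 → Fin e → Bool}
    (hc : ∀ s, (rowSet M s).card = (rowSet M' s).card)
    (hdom : Dom (Pt0 M) (Pt0 M')) (t : Fin 3) (zc : ℕ)
    (hzc : zc ≤ (rowSet M t).card) :
    GZ M' t zc ≤ GZ M t zc := by
  have h := hdom t zc
  have hcast : (((∑ s ∈ Finset.univ.filter (· < t), psize (Pt0 M' s))
      + ∑ x ∈ Finset.range zc, Pt0 M' t x : ℕ) : ℤ)
      ≤ (((∑ s ∈ Finset.univ.filter (· < t), psize (Pt0 M s))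
      + ∑ x ∈ Finset.range zc, Pt0 M t x : ℕ) : ℤ) := by exact_mod_cast h
  rw [dom_side_cast he M t zc hzc, dom_side_cast he M' t zc (hc t ▸ hzc),
    ← corr_eq hc] at hcast
  linarith

lemma Dom_of_GZ_le (he : 0 < e) {M M' : Fin 3 → Fin e → Bool}
    (hc : ∀ s, (rowSet M s).card = (rowSet M' s).card)
    (h : ∀ t zc, zc ≤ (rowSet M t).card → GZ M' t zc ≤ GZ M t zc) :
    Dom (Pt0 M) (Pt0 M') := by
  intro t zc
  rw [prefix_trunc he M t zc, prefix_trunc he M' t zc]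
  rw [← hc t]
  set zc' := min zc (rowSet M t).card with hzc'
  have hz1 : zc' ≤ (rowSet M t).card := min_le_right _ _
  have hkey := h t zc' hz1
  have c1 := dom_side_cast he M t zc' hz1
  have c2 := dom_side_cast he M' t zc' (hc t ▸ hz1)
  rw [← corr_eq hc] at c2
  have : (((∑ s ∈ Finset.univ.filter (· < t), psize (Pt0 M' s))
      + ∑ x ∈ Finset.range zc', Pt0 M' t x : ℕ) : ℤ)
      ≤ (((∑ s ∈ Finset.univ.filter (· < t), psize (Pt0 M s))
      + ∑ x ∈ Finset.range zc', Pt0 M t x : ℕ) : ℤ) := by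
    rw [c1, c2]; linarith
  exact_mod_cast this

lemma Pt0_ne_of_GZ_ne (he : 0 < e) {M M' : Fin 3 → Fin e → Bool}
    (hc : ∀ s, (rowSet M s).card = (rowSet M' s).card) {t : Fin 3} {zc : ℕ}
    (hzc : zc ≤ (rowSet M t).card)
    (hne : GZ M' t zc ≠ GZ M t zc) : Pt0 M ≠ Pt0 M' := by
  intro heq
  apply hne
  have c1 := dom_side_cast he M t zc hzc
  have c2 := dom_side_cast he M' t zc (hc t ▸ hzc)
  rw [heq] at c1
  rw [← corr_eq hc] at c2
  rw [c1] at c2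
  linarith

lemma SDom_helper (he : 0 < e) {M M' : Fin 3 → Fin e → Bool}
    (hc : ∀ s, (rowSet M s).card = (rowSet M' s).card)
    (h : ∀ t zc, zc ≤ (rowSet M t).card → GZ M' t zc ≤ GZ M t zc)
    (t₀ : Fin 3) (zc₀ : ℕ) (hz₀ : zc₀ ≤ (rowSet M t₀).card)
    (hne : GZ M' t₀ zc₀ ≠ GZ M t₀ zc₀) :
    SDom (Pt0 M) (Pt0 M') :=
  ⟨Dom_of_GZ_le he hc h, Pt0_ne_of_GZ_ne he hc hz₀ hne⟩

lemma filter_lt_zero : Finset.univ.filter (· < (0 : Fin 3)) = ∅ := by decide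
lemma filter_lt_one : Finset.univ.filter (· < (1 : Fin 3)) = {0} := by decide
lemma filter_lt_two : Finset.univ.filter (· < (2 : Fin 3)) = {0, 1} := by decide

lemma GZ_zero (M : Fin 3 → Fin e → Bool) (zc : ℕ) :
    GZ M 0 zc = TE (rowSet M 0) zc := by
  rw [GZ, filter_lt_zero]; simp

lemma GZ_one (M : Fin 3 → Fin e → Bool) (zc : ℕ) :
    GZ M 1 zc = ssum (rowSet M 0) + TE (rowSet M 1) zc := by
  rw [GZ, filter_lt_one]; simp

lemma GZ_two (M : Fin 3 → Fin e → Bool) (zc : ℕ) :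
    GZ M 2 zc = ssum (rowSet M 0) + ssum (rowSet M 1) + TE (rowSet M 2) zc := by
  rw [GZ, filter_lt_two, Finset.sum_pair (by decide : (0 : Fin 3) ≠ 1)]

end DomCrit


/-! ### Column values and row sets of the matrices -/

section Rows

variable {e : ℕ}

lemma ycol_1_0 : ycol 1 0 = true := by decide
lemma ycol_1_1 : ycol 1 1 = false := by decide
lemma ycol_1_2 : ycol 1 2 = false := by decide
lemma ycol_2_0 : ycol 2 0 = true := by decide
lemma ycol_2_1 : ycol 2 1 = true := by decide
lemma ycol_2_2 : ycol 2 2 = false := by decide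
lemma zcol_1_0 : zcol 1 0 = true := by decide
lemma zcol_1_1 : zcol 1 1 = false := by decide
lemma zcol_1_2 : zcol 1 2 = true := by decide
lemma zcol_2_0 : zcol 2 0 = false := by decide
lemma zcol_2_1 : zcol 2 1 = true := by decide
lemma zcol_2_2 : zcol 2 2 = false := by decide
lemma oycol_1_0 : oycol 1 0 = false := by decide
lemma oycol_1_1 : oycol 1 1 = false := by decide
lemma oycol_1_2 : oycol 1 2 = true := by decide
lemma oycol_2_0 : oycol 2 0 = false := by decide
lemma oycol_2_1 : oycol 2 1 = true := by decide
lemma oycol_2_2 : oycol 2 2 = true := by decide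
lemma ozcol_1_0 : ozcol 1 0 = true := by decide
lemma ozcol_1_1 : ozcol 1 1 = true := by decide
lemma ozcol_1_2 : ozcol 1 2 = false := by decide
lemma ozcol_2_0 : ozcol 2 0 = true := by decide
lemma ozcol_2_1 : ozcol 2 1 = false := by decide
lemma ozcol_2_2 : ozcol 2 2 = false := by decide
lemma aacol_1_0 : aacol 1 0 = false := by decide
lemma aacol_1_1 : aacol 1 1 = true := by decide
lemma aacol_1_2 : aacol 1 2 = false := by decide
lemma aacol_2_0 : aacol 2 0 = true := by decide
lemma aacol_2_1 : aacol 2 1 = false := by decide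
lemma aacol_2_2 : aacol 2 2 = true := by decide
lemma abcol_1_0 : abcol 1 0 = false := by decide
lemma abcol_1_1 : abcol 1 1 = true := by decide
lemma abcol_1_2 : abcol 1 2 = true := by decide
lemma abcol_2_0 : abcol 2 0 = false := by decide
lemma abcol_2_1 : abcol 2 1 = false := by decide
lemma abcol_2_2 : abcol 2 2 = true := by decide

lemma insert_erase_erase {W : Finset (Fin e)} {a b : Fin e} (ha : a ∈ W) (hb : b ∈ W)
    (hab : a ≠ b) : insert b ((W.erase b).erase a) = W.erase a := by
  rw [Finset.erase_right_comm]
  exact Finset.insert_erase (Finset.mem_erase.mpr ⟨hab.symm, hb⟩)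

lemma ssum_erase {W : Finset (Fin e)} {a : Fin e} (ha : a ∈ W) :
    ssum (W.erase a) = ssum W - ((a : ℕ) : ℤ) :=
  Finset.sum_erase_eq_sub ha

lemma ssum_insert {S : Finset (Fin e)} {a : Fin e} (ha : a ∉ S) :
    ssum (insert a S) = ((a : ℕ) : ℤ) + ssum S :=
  Finset.sum_insert ha

lemma ssum_singleton (a : Fin e) : ssum ({a} : Finset (Fin e)) = ((a : ℕ) : ℤ) := by
  simp [ssum]

lemma mem_le_ssum {W : Finset (Fin e)} {a : Fin e} (ha : a ∈ W) :
    ((a : ℕ) : ℤ) ≤ ssum W :=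
  Finset.single_le_sum (f := fun b : Fin e => ((b : ℕ) : ℤ))
    (fun b _ => Int.natCast_nonneg _) ha

variable {y z : ℕ} (Y Z : Finset (Fin e)) (hY : Y.card = y + 1) (hZ : Z.card = z + 1)
  (hYZ : Disjoint Y Z)

section RowSets

variable (k : Fin (y + 1)) (l : Fin (z + 1))

include hYZ

lemma rowSet_alpha_1_0 :
    rowSet (alphaM Y Z hY 1 k) 0 = (Y ∪ Z).erase (Y.orderEmbOfFin hY k) := by
  have hk : Y.orderEmbOfFin hY k ∈ Y := Finset.orderEmbOfFin_mem Y hY k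
  have hd1 : ∀ a, a ∈ Y → a ∉ Z := fun a ha => Finset.disjoint_left.mp hYZ ha
  have hd2 : ∀ a, a ∈ Z → a ∉ Y := fun a ha => Finset.disjoint_right.mp hYZ ha
  ext c
  simp only [mem_rowSet, alphaM, Finset.mem_erase, Finset.mem_union, Finset.mem_insert, Finset.mem_singleton]
  split_ifs with h1 h2 h3 <;>
    simp_all [aacol_1_0, ycol_1_0, zcol_1_0] <;>
    try tauto

lemma rowSet_alpha_1_1 :
    rowSet (alphaM Y Z hY 1 k) 1 = {Y.orderEmbOfFin hY k} := by
  have hk : Y.orderEmbOfFin hY k ∈ Y := Finset.orderEmbOfFin_mem Y hY k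
  have hd1 : ∀ a, a ∈ Y → a ∉ Z := fun a ha => Finset.disjoint_left.mp hYZ ha
  have hd2 : ∀ a, a ∈ Z → a ∉ Y := fun a ha => Finset.disjoint_right.mp hYZ ha
  ext c
  simp only [mem_rowSet, alphaM, Finset.mem_erase, Finset.mem_union, Finset.mem_insert, Finset.mem_singleton]
  split_ifs with h1 h2 h3 <;>
    simp_all [aacol_1_1, ycol_1_1, zcol_1_1] <;>
    try tauto

lemma rowSet_alpha_1_2 :
    rowSet (alphaM Y Z hY 1 k) 2 = Z := by
  have hk : Y.orderEmbOfFin hY k ∈ Y := Finset.orderEmbOfFin_mem Y hY k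
  have hd1 : ∀ a, a ∈ Y → a ∉ Z := fun a ha => Finset.disjoint_left.mp hYZ ha
  have hd2 : ∀ a, a ∈ Z → a ∉ Y := fun a ha => Finset.disjoint_right.mp hYZ ha
  ext c
  simp only [mem_rowSet, alphaM, Finset.mem_erase, Finset.mem_union, Finset.mem_insert, Finset.mem_singleton]
  split_ifs with h1 h2 h3 <;>
    simp_all [aacol_1_2, ycol_1_2, zcol_1_2] <;>
    try tauto

lemma rowSet_beta_1_0 :
    rowSet (betaM Y Z hZ 1 l) 0 = (Y ∪ Z).erase (Z.orderEmbOfFin hZ l) := by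
  have hl : Z.orderEmbOfFin hZ l ∈ Z := Finset.orderEmbOfFin_mem Z hZ l
  have hd1 : ∀ a, a ∈ Y → a ∉ Z := fun a ha => Finset.disjoint_left.mp hYZ ha
  have hd2 : ∀ a, a ∈ Z → a ∉ Y := fun a ha => Finset.disjoint_right.mp hYZ ha
  ext c
  simp only [mem_rowSet, betaM, Finset.mem_erase, Finset.mem_union, Finset.mem_insert, Finset.mem_singleton]
  split_ifs with h1 h2 h3 <;>
    simp_all [abcol_1_0, zcol_1_0, ycol_1_0] <;>
    try tauto

lemma rowSet_beta_1_1 :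
    rowSet (betaM Y Z hZ 1 l) 1 = {Z.orderEmbOfFin hZ l} := by
  have hl : Z.orderEmbOfFin hZ l ∈ Z := Finset.orderEmbOfFin_mem Z hZ l
  have hd1 : ∀ a, a ∈ Y → a ∉ Z := fun a ha => Finset.disjoint_left.mp hYZ ha
  have hd2 : ∀ a, a ∈ Z → a ∉ Y := fun a ha => Finset.disjoint_right.mp hYZ ha
  ext c
  simp only [mem_rowSet, betaM, Finset.mem_erase, Finset.mem_union, Finset.mem_insert, Finset.mem_singleton]
  split_ifs with h1 h2 h3 <;>
    simp_all [abcol_1_1, zcol_1_1, ycol_1_1] <;>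
    try tauto

lemma rowSet_beta_1_2 :
    rowSet (betaM Y Z hZ 1 l) 2 = Z := by
  have hl : Z.orderEmbOfFin hZ l ∈ Z := Finset.orderEmbOfFin_mem Z hZ l
  have hd1 : ∀ a, a ∈ Y → a ∉ Z := fun a ha => Finset.disjoint_left.mp hYZ ha
  have hd2 : ∀ a, a ∈ Z → a ∉ Y := fun a ha => Finset.disjoint_right.mp hYZ ha
  ext c
  simp only [mem_rowSet, betaM, Finset.mem_erase, Finset.mem_union, Finset.mem_insert, Finset.mem_singleton]
  split_ifs with h1 h2 h3 <;>
    simp_all [abcol_1_2, zcol_1_2, ycol_1_2] <;>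
    try tauto

lemma rowSet_gamma_1_0 :
    rowSet (gammaM Y Z hY hZ 1 k l) 0 = (Y ∪ Z).erase (Y.orderEmbOfFin hY k) := by
  have hk : Y.orderEmbOfFin hY k ∈ Y := Finset.orderEmbOfFin_mem Y hY k
  have hl : Z.orderEmbOfFin hZ l ∈ Z := Finset.orderEmbOfFin_mem Z hZ l
  have hd1 : ∀ a, a ∈ Y → a ∉ Z := fun a ha => Finset.disjoint_left.mp hYZ ha
  have hkl : Y.orderEmbOfFin hY k ≠ Z.orderEmbOfFin hZ l := fun hq =>
    (Finset.disjoint_left.mp hYZ (Finset.orderEmbOfFin_mem Y hY k))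
      (hq ▸ Finset.orderEmbOfFin_mem Z hZ l)
  have hd2 : ∀ a, a ∈ Z → a ∉ Y := fun a ha => Finset.disjoint_right.mp hYZ ha
  ext c
  simp only [mem_rowSet, gammaM, Finset.mem_erase, Finset.mem_union, Finset.mem_insert, Finset.mem_singleton]
  split_ifs with h1 h2 h3 h4 <;>
    simp_all [oycol_1_0, ozcol_1_0, ycol_1_0, zcol_1_0] <;>
    try tauto

lemma rowSet_gamma_1_1 :
    rowSet (gammaM Y Z hY hZ 1 k l) 1 = {Z.orderEmbOfFin hZ l} := by
  have hk : Y.orderEmbOfFin hY k ∈ Y := Finset.orderEmbOfFin_mem Y hY k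
  have hl : Z.orderEmbOfFin hZ l ∈ Z := Finset.orderEmbOfFin_mem Z hZ l
  have hd1 : ∀ a, a ∈ Y → a ∉ Z := fun a ha => Finset.disjoint_left.mp hYZ ha
  have hkl : Y.orderEmbOfFin hY k ≠ Z.orderEmbOfFin hZ l := fun hq =>
    (Finset.disjoint_left.mp hYZ (Finset.orderEmbOfFin_mem Y hY k))
      (hq ▸ Finset.orderEmbOfFin_mem Z hZ l)
  have hd2 : ∀ a, a ∈ Z → a ∉ Y := fun a ha => Finset.disjoint_right.mp hYZ ha
  ext c
  simp only [mem_rowSet, gammaM, Finset.mem_erase, Finset.mem_union, Finset.mem_insert, Finset.mem_singleton]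
  split_ifs with h1 h2 h3 h4 <;>
    simp_all [oycol_1_1, ozcol_1_1, ycol_1_1, zcol_1_1] <;>
    try tauto

lemma rowSet_gamma_1_2 :
    rowSet (gammaM Y Z hY hZ 1 k l) 2 = insert (Y.orderEmbOfFin hY k) (Z.erase (Z.orderEmbOfFin hZ l)) := by
  have hk : Y.orderEmbOfFin hY k ∈ Y := Finset.orderEmbOfFin_mem Y hY k
  have hl : Z.orderEmbOfFin hZ l ∈ Z := Finset.orderEmbOfFin_mem Z hZ l
  have hd1 : ∀ a, a ∈ Y → a ∉ Z := fun a ha => Finset.disjoint_left.mp hYZ ha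
  have hkl : Y.orderEmbOfFin hY k ≠ Z.orderEmbOfFin hZ l := fun hq =>
    (Finset.disjoint_left.mp hYZ (Finset.orderEmbOfFin_mem Y hY k))
      (hq ▸ Finset.orderEmbOfFin_mem Z hZ l)
  have hd2 : ∀ a, a ∈ Z → a ∉ Y := fun a ha => Finset.disjoint_right.mp hYZ ha
  ext c
  simp only [mem_rowSet, gammaM, Finset.mem_erase, Finset.mem_union, Finset.mem_insert, Finset.mem_singleton]
  split_ifs with h1 h2 h3 h4 <;>
    simp_all [oycol_1_2, ozcol_1_2, ycol_1_2, zcol_1_2] <;>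
    try tauto

lemma rowSet_alpha_2_0 :
    rowSet (alphaM Y Z hY 2 k) 0 = Y := by
  have hk : Y.orderEmbOfFin hY k ∈ Y := Finset.orderEmbOfFin_mem Y hY k
  have hd1 : ∀ a, a ∈ Y → a ∉ Z := fun a ha => Finset.disjoint_left.mp hYZ ha
  have hd2 : ∀ a, a ∈ Z → a ∉ Y := fun a ha => Finset.disjoint_right.mp hYZ ha
  ext c
  simp only [mem_rowSet, alphaM, Finset.mem_erase, Finset.mem_union, Finset.mem_insert, Finset.mem_singleton]
  split_ifs with h1 h2 h3 <;>
    simp_all [aacol_2_0, ycol_2_0, zcol_2_0] <;>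
    try tauto

lemma rowSet_alpha_2_1 :
    rowSet (alphaM Y Z hY 2 k) 1 = (Y ∪ Z).erase (Y.orderEmbOfFin hY k) := by
  have hk : Y.orderEmbOfFin hY k ∈ Y := Finset.orderEmbOfFin_mem Y hY k
  have hd1 : ∀ a, a ∈ Y → a ∉ Z := fun a ha => Finset.disjoint_left.mp hYZ ha
  have hd2 : ∀ a, a ∈ Z → a ∉ Y := fun a ha => Finset.disjoint_right.mp hYZ ha
  ext c
  simp only [mem_rowSet, alphaM, Finset.mem_erase, Finset.mem_union, Finset.mem_insert, Finset.mem_singleton]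
  split_ifs with h1 h2 h3 <;>
    simp_all [aacol_2_1, ycol_2_1, zcol_2_1] <;>
    try tauto

lemma rowSet_alpha_2_2 :
    rowSet (alphaM Y Z hY 2 k) 2 = {Y.orderEmbOfFin hY k} := by
  have hk : Y.orderEmbOfFin hY k ∈ Y := Finset.orderEmbOfFin_mem Y hY k
  have hd1 : ∀ a, a ∈ Y → a ∉ Z := fun a ha => Finset.disjoint_left.mp hYZ ha
  have hd2 : ∀ a, a ∈ Z → a ∉ Y := fun a ha => Finset.disjoint_right.mp hYZ ha
  ext c
  simp only [mem_rowSet, alphaM, Finset.mem_erase, Finset.mem_union, Finset.mem_insert, Finset.mem_singleton]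
  split_ifs with h1 h2 h3 <;>
    simp_all [aacol_2_2, ycol_2_2, zcol_2_2] <;>
    try tauto

lemma rowSet_beta_2_0 :
    rowSet (betaM Y Z hZ 2 l) 0 = Y := by
  have hl : Z.orderEmbOfFin hZ l ∈ Z := Finset.orderEmbOfFin_mem Z hZ l
  have hd1 : ∀ a, a ∈ Y → a ∉ Z := fun a ha => Finset.disjoint_left.mp hYZ ha
  have hd2 : ∀ a, a ∈ Z → a ∉ Y := fun a ha => Finset.disjoint_right.mp hYZ ha
  ext c
  simp only [mem_rowSet, betaM, Finset.mem_erase, Finset.mem_union, Finset.mem_insert, Finset.mem_singleton]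
  split_ifs with h1 h2 h3 <;>
    simp_all [abcol_2_0, zcol_2_0, ycol_2_0] <;>
    try tauto

lemma rowSet_beta_2_1 :
    rowSet (betaM Y Z hZ 2 l) 1 = (Y ∪ Z).erase (Z.orderEmbOfFin hZ l) := by
  have hl : Z.orderEmbOfFin hZ l ∈ Z := Finset.orderEmbOfFin_mem Z hZ l
  have hd1 : ∀ a, a ∈ Y → a ∉ Z := fun a ha => Finset.disjoint_left.mp hYZ ha
  have hd2 : ∀ a, a ∈ Z → a ∉ Y := fun a ha => Finset.disjoint_right.mp hYZ ha
  ext c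
  simp only [mem_rowSet, betaM, Finset.mem_erase, Finset.mem_union, Finset.mem_insert, Finset.mem_singleton]
  split_ifs with h1 h2 h3 <;>
    simp_all [abcol_2_1, zcol_2_1, ycol_2_1] <;>
    try tauto

lemma rowSet_beta_2_2 :
    rowSet (betaM Y Z hZ 2 l) 2 = {Z.orderEmbOfFin hZ l} := by
  have hl : Z.orderEmbOfFin hZ l ∈ Z := Finset.orderEmbOfFin_mem Z hZ l
  have hd1 : ∀ a, a ∈ Y → a ∉ Z := fun a ha => Finset.disjoint_left.mp hYZ ha
  have hd2 : ∀ a, a ∈ Z → a ∉ Y := fun a ha => Finset.disjoint_right.mp hYZ ha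
  ext c
  simp only [mem_rowSet, betaM, Finset.mem_erase, Finset.mem_union, Finset.mem_insert, Finset.mem_singleton]
  split_ifs with h1 h2 h3 <;>
    simp_all [abcol_2_2, zcol_2_2, ycol_2_2] <;>
    try tauto

lemma rowSet_gamma_2_0 :
    rowSet (gammaM Y Z hY hZ 2 k l) 0 = insert (Z.orderEmbOfFin hZ l) (Y.erase (Y.orderEmbOfFin hY k)) := by
  have hk : Y.orderEmbOfFin hY k ∈ Y := Finset.orderEmbOfFin_mem Y hY k
  have hl : Z.orderEmbOfFin hZ l ∈ Z := Finset.orderEmbOfFin_mem Z hZ l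
  have hd1 : ∀ a, a ∈ Y → a ∉ Z := fun a ha => Finset.disjoint_left.mp hYZ ha
  have hkl : Y.orderEmbOfFin hY k ≠ Z.orderEmbOfFin hZ l := fun hq =>
    (Finset.disjoint_left.mp hYZ (Finset.orderEmbOfFin_mem Y hY k))
      (hq ▸ Finset.orderEmbOfFin_mem Z hZ l)
  have hd2 : ∀ a, a ∈ Z → a ∉ Y := fun a ha => Finset.disjoint_right.mp hYZ ha
  ext c
  simp only [mem_rowSet, gammaM, Finset.mem_erase, Finset.mem_union, Finset.mem_insert, Finset.mem_singleton]
  split_ifs with h1 h2 h3 h4 <;>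
    simp_all [oycol_2_0, ozcol_2_0, ycol_2_0, zcol_2_0] <;>
    try tauto

lemma rowSet_gamma_2_1 :
    rowSet (gammaM Y Z hY hZ 2 k l) 1 = (Y ∪ Z).erase (Z.orderEmbOfFin hZ l) := by
  have hk : Y.orderEmbOfFin hY k ∈ Y := Finset.orderEmbOfFin_mem Y hY k
  have hl : Z.orderEmbOfFin hZ l ∈ Z := Finset.orderEmbOfFin_mem Z hZ l
  have hd1 : ∀ a, a ∈ Y → a ∉ Z := fun a ha => Finset.disjoint_left.mp hYZ ha
  have hkl : Y.orderEmbOfFin hY k ≠ Z.orderEmbOfFin hZ l := fun hq =>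
    (Finset.disjoint_left.mp hYZ (Finset.orderEmbOfFin_mem Y hY k))
      (hq ▸ Finset.orderEmbOfFin_mem Z hZ l)
  have hd2 : ∀ a, a ∈ Z → a ∉ Y := fun a ha => Finset.disjoint_right.mp hYZ ha
  ext c
  simp only [mem_rowSet, gammaM, Finset.mem_erase, Finset.mem_union, Finset.mem_insert, Finset.mem_singleton]
  split_ifs with h1 h2 h3 h4 <;>
    simp_all [oycol_2_1, ozcol_2_1, ycol_2_1, zcol_2_1] <;>
    try tauto

lemma rowSet_gamma_2_2 :
    rowSet (gammaM Y Z hY hZ 2 k l) 2 = {Y.orderEmbOfFin hY k} := by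
  have hk : Y.orderEmbOfFin hY k ∈ Y := Finset.orderEmbOfFin_mem Y hY k
  have hl : Z.orderEmbOfFin hZ l ∈ Z := Finset.orderEmbOfFin_mem Z hZ l
  have hd1 : ∀ a, a ∈ Y → a ∉ Z := fun a ha => Finset.disjoint_left.mp hYZ ha
  have hkl : Y.orderEmbOfFin hY k ≠ Z.orderEmbOfFin hZ l := fun hq =>
    (Finset.disjoint_left.mp hYZ (Finset.orderEmbOfFin_mem Y hY k))
      (hq ▸ Finset.orderEmbOfFin_mem Z hZ l)
  have hd2 : ∀ a, a ∈ Z → a ∉ Y := fun a ha => Finset.disjoint_right.mp hYZ ha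
  ext c
  simp only [mem_rowSet, gammaM, Finset.mem_erase, Finset.mem_union, Finset.mem_insert, Finset.mem_singleton]
  split_ifs with h1 h2 h3 h4 <;>
    simp_all [oycol_2_2, ozcol_2_2, ycol_2_2, zcol_2_2] <;>
    try tauto

end RowSets

end Rows


/-! ### Shape lemmas -/

section Shapes

variable {e : ℕ}

lemma SDom_of_rows (he : 0 < e) (M M' : Fin 3 → Fin e → Bool)
    {R0 R1 R2 Q0 Q1 Q2 : Finset (Fin e)}
    (h0 : rowSet M 0 = R0) (h1 : rowSet M 1 = R1) (h2 : rowSet M 2 = R2)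
    (h0' : rowSet M' 0 = Q0) (h1' : rowSet M' 1 = Q1) (h2' : rowSet M' 2 = Q2)
    (hc0 : R0.card = Q0.card) (hc1 : R1.card = Q1.card) (hc2 : R2.card = Q2.card)
    (hT0 : ∀ zc, zc ≤ R0.card → TE Q0 zc ≤ TE R0 zc)
    (hT1 : ∀ zc, zc ≤ R1.card → ssum Q0 + TE Q1 zc ≤ ssum R0 + TE R1 zc)
    (hT2 : ∀ zc, zc ≤ R2.card →
      ssum Q0 + ssum Q1 + TE Q2 zc ≤ ssum R0 + ssum R1 + TE R2 zc)
    (hne : (∃ zc, zc ≤ R0.card ∧ TE Q0 zc ≠ TE R0 zc) ∨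
           (∃ zc, zc ≤ R1.card ∧ ssum Q0 + TE Q1 zc ≠ ssum R0 + TE R1 zc) ∨
           (∃ zc, zc ≤ R2.card ∧
             ssum Q0 + ssum Q1 + TE Q2 zc ≠ ssum R0 + ssum R1 + TE R2 zc)) :
    SDom (Pt0 M) (Pt0 M') := by
  have hc : ∀ s, (rowSet M s).card = (rowSet M' s).card := by
    intro s
    fin_cases s
    · show (rowSet M 0).card = (rowSet M' 0).card
      rw [h0, h0']; exact hc0
    · show (rowSet M 1).card = (rowSet M' 1).card
      rw [h1, h1']; exact hc1
    · show (rowSet M 2).card = (rowSet M' 2).card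
      rw [h2, h2']; exact hc2
  have hG : ∀ t zc, zc ≤ (rowSet M t).card → GZ M' t zc ≤ GZ M t zc := by
    intro t zc hzc
    fin_cases t
    · replace hzc : zc ≤ (rowSet M 0).card := hzc
      show GZ M' 0 zc ≤ GZ M 0 zc
      rw [GZ_zero, GZ_zero, h0, h0']; exact hT0 zc (by rwa [h0] at hzc)
    · replace hzc : zc ≤ (rowSet M 1).card := hzc
      show GZ M' 1 zc ≤ GZ M 1 zc
      rw [GZ_one, GZ_one, h0, h1, h0', h1']; exact hT1 zc (by rwa [h1] at hzc)
    · replace hzc : zc ≤ (rowSet M 2).card := hzc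
      show GZ M' 2 zc ≤ GZ M 2 zc
      rw [GZ_two, GZ_two, h0, h1, h2, h0', h1', h2']; exact hT2 zc (by rwa [h2] at hzc)
  rcases hne with ⟨zc, hzc, hne⟩ | ⟨zc, hzc, hne⟩ | ⟨zc, hzc, hne⟩
  · exact SDom_helper he hc hG 0 zc (by rwa [h0])
      (by rw [GZ_zero, GZ_zero, h0, h0']; exact hne)
  · exact SDom_helper he hc hG 1 zc (by rwa [h1])
      (by rw [GZ_one, GZ_one, h0, h1, h0', h1']; exact hne)
  · exact SDom_helper he hc hG 2 zc (by rwa [h2])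
      (by rw [GZ_two, GZ_two, h0, h1, h2, h0', h1', h2']; exact hne)

lemma fin_cast_le {a b : Fin e} (h : ((a : ℕ) : ℤ) ≤ ((b : ℕ) : ℤ)) : a ≤ b := by
  exact_mod_cast h

lemma fin_cast_le' {a b : Fin e} (h : a ≤ b) : ((a : ℕ) : ℤ) ≤ ((b : ℕ) : ℤ) := by
  exact_mod_cast h

lemma fin_cast_ne {a b : Fin e} (h : a ≠ b) : ((a : ℕ) : ℤ) ≠ ((b : ℕ) : ℤ) := by
  simpa [Fin.val_injective.ne_iff] using h

/-- Shape for (i)/(ii), `u = 2` (Lean `u = 1`): rows `(W∖a, {a}, C)` vs `(W∖b, {b}, C)`. -/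
lemma shape1 (he : 0 < e) (M M' : Fin 3 → Fin e → Bool) (W C : Finset (Fin e)) (a b : Fin e)
    (haW : a ∈ W) (hbW : b ∈ W) (hab : a < b)
    (h0 : rowSet M 0 = W.erase a) (h1 : rowSet M 1 = {a}) (h2 : rowSet M 2 = C)
    (h0' : rowSet M' 0 = W.erase b) (h1' : rowSet M' 1 = {b}) (h2' : rowSet M' 2 = C) :
    SDom (Pt0 M) (Pt0 M') := by
  have hne' : a ≠ b := ne_of_lt hab
  have hab' : ((a : ℕ) : ℤ) ≤ ((b : ℕ) : ℤ) := fin_cast_le' hab.le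
  have hcard : (W.erase a).card = (W.erase b).card := by
    rw [Finset.card_erase_of_mem haW, Finset.card_erase_of_mem hbW]
  have hsa := ssum_erase haW
  have hsb := ssum_erase hbW
  apply SDom_of_rows he M M' h0 h1 h2 h0' h1' h2' hcard (by simp) rfl
  · intro zc hzc
    have h := TE_le_swap (S := W.erase b) (a := a) (b := b)
      (Finset.mem_erase.mpr ⟨hne', haW⟩) (Finset.notMem_erase b W) hab.le zc
      (by rw [← hcard]; exact hzc)
    rwa [insert_erase_erase haW hbW hne'] at h
  · intro zc hzc
    have hzc1 : zc ≤ 1 := by simpa using hzc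
    interval_cases zc
    · rw [TE_zero, TE_zero, hsa, hsb]; linarith
    · rw [TE_singleton, TE_singleton, hsa, hsb]; linarith
  · intro zc _
    rw [hsa, hsb, ssum_singleton, ssum_singleton]
    apply le_of_eq
    ring
  · right; left
    refine ⟨0, by simp, ?_⟩
    simp only [TE_zero, add_zero]
    rw [hsa, hsb]
    intro hq
    exact fin_cast_ne hne' (by linarith)

/-- Shape for (i)/(ii), `u = 3` (Lean `u = 2`): rows `(C, W∖a, {a})` vs `(C, W∖b, {b})`. -/
lemma shape2 (he : 0 < e) (M M' : Fin 3 → Fin e → Bool) (W C : Finset (Fin e)) (a b : Fin e)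
    (haW : a ∈ W) (hbW : b ∈ W) (hab : a < b)
    (h0 : rowSet M 0 = C) (h1 : rowSet M 1 = W.erase a) (h2 : rowSet M 2 = {a})
    (h0' : rowSet M' 0 = C) (h1' : rowSet M' 1 = W.erase b) (h2' : rowSet M' 2 = {b}) :
    SDom (Pt0 M) (Pt0 M') := by
  have hne' : a ≠ b := ne_of_lt hab
  have hab' : ((a : ℕ) : ℤ) ≤ ((b : ℕ) : ℤ) := fin_cast_le' hab.le
  have hcard : (W.erase a).card = (W.erase b).card := by
    rw [Finset.card_erase_of_mem haW, Finset.card_erase_of_mem hbW]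
  have hsa := ssum_erase haW
  have hsb := ssum_erase hbW
  apply SDom_of_rows he M M' h0 h1 h2 h0' h1' h2' rfl hcard (by simp)
  · intro zc _; exact le_refl _
  · intro zc hzc
    have h := TE_le_swap (S := W.erase b) (a := a) (b := b)
      (Finset.mem_erase.mpr ⟨hne', haW⟩) (Finset.notMem_erase b W) hab.le zc
      (by rw [← hcard]; exact hzc)
    rw [insert_erase_erase haW hbW hne'] at h
    linarith
  · intro zc hzc
    have hzc1 : zc ≤ 1 := by simpa using hzc
    interval_cases zc
    · rw [TE_zero, TE_zero, hsa, hsb]; linarith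
    · rw [TE_singleton, TE_singleton, hsa, hsb]; linarith
  · right; right
    refine ⟨0, by simp, ?_⟩
    simp only [TE_zero, add_zero]
    rw [hsa, hsb]
    intro hq
    exact fin_cast_ne hne' (by linarith)

/-- Shape for (iii) first claim, `u = 1`: `γ_{k,l+1} ⊳ γ_{k,l}`. -/
lemma shape3 (he : 0 < e) (M M' : Fin 3 → Fin e → Bool) (Y Z : Finset (Fin e))
    (i j j' : Fin e) (hiY : i ∈ Y) (hjZ : j ∈ Z) (hj'Z : j' ∈ Z) (hjj' : j < j')
    (hYZ : Disjoint Y Z)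
    (h0 : rowSet M 0 = (Y ∪ Z).erase i) (h1 : rowSet M 1 = {j'})
    (h2 : rowSet M 2 = insert i (Z.erase j'))
    (h0' : rowSet M' 0 = (Y ∪ Z).erase i) (h1' : rowSet M' 1 = {j})
    (h2' : rowSet M' 2 = insert i (Z.erase j)) :
    SDom (Pt0 M) (Pt0 M') := by
  have hne' : j ≠ j' := ne_of_lt hjj'
  have hab' : ((j : ℕ) : ℤ) ≤ ((j' : ℕ) : ℤ) := fin_cast_le' hjj'.le
  have hiZ : i ∉ Z := Finset.disjoint_left.mp hYZ hiY
  have hij : i ≠ j := fun h => hiZ (by rw [h]; exact hjZ)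
  have hij' : i ≠ j' := fun h => hiZ (by rw [h]; exact hj'Z)
  have hZ1 : 0 < Z.card := Finset.card_pos.mpr ⟨j, hjZ⟩
  have hv : ∀ c : Fin e, c ∈ Z → insert i (Z.erase c) = (insert i Z).erase c := by
    intro c hc
    rw [Finset.erase_insert_of_ne (fun h => hiZ (by rw [h]; exact hc))]
  have hcard : (insert i (Z.erase j')).card = (insert i (Z.erase j)).card := by
    rw [Finset.card_insert_of_notMem (fun h => hiZ (Finset.mem_of_mem_erase h)),
      Finset.card_insert_of_notMem (fun h => hiZ (Finset.mem_of_mem_erase h)),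
      Finset.card_erase_of_mem hjZ, Finset.card_erase_of_mem hj'Z]
  have hjV : j ∈ insert i Z := Finset.mem_insert_of_mem hjZ
  have hj'V : j' ∈ insert i Z := Finset.mem_insert_of_mem hj'Z
  apply SDom_of_rows he M M' h0 h1 h2 h0' h1' h2' rfl (by simp) hcard
  · intro zc _; exact le_refl _
  · intro zc hzc
    have hzc1 : zc ≤ 1 := by simpa using hzc
    interval_cases zc
    · rw [TE_zero, TE_zero]
    · rw [TE_singleton, TE_singleton]; linarith
  · intro zc hzc
    rw [ssum_singleton, ssum_singleton, hv j hjZ, hv j' hj'Z]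
    have h := TE_swap_add (S := (insert i Z).erase j) (a := j) (b := j')
      (Finset.mem_erase.mpr ⟨hne'.symm, hj'V⟩) (Finset.notMem_erase j _) hjj'.le zc
      (by
        rw [Finset.card_erase_of_mem hjV]
        rw [hv j' hj'Z, Finset.card_erase_of_mem hj'V] at hzc
        exact hzc)
    rw [insert_erase_erase hj'V hjV hne'.symm] at h
    linarith
  · right; left
    refine ⟨1, by simp, ?_⟩
    rw [TE_singleton, TE_singleton]
    intro hq
    exact fin_cast_ne hne' (by linarith)

/-- Shape for (iii) second claim, `u = 1`: `γ_{k,l} ⊳ γ_{k+1,l}`. -/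
lemma shape4 (he : 0 < e) (M M' : Fin 3 → Fin e → Bool) (Y Z : Finset (Fin e))
    (i i' j : Fin e) (hiY : i ∈ Y) (hi'Y : i' ∈ Y) (hjZ : j ∈ Z) (hii' : i < i')
    (hYZ : Disjoint Y Z)
    (h0 : rowSet M 0 = (Y ∪ Z).erase i) (h1 : rowSet M 1 = {j})
    (h2 : rowSet M 2 = insert i (Z.erase j))
    (h0' : rowSet M' 0 = (Y ∪ Z).erase i') (h1' : rowSet M' 1 = {j})
    (h2' : rowSet M' 2 = insert i' (Z.erase j)) :
    SDom (Pt0 M) (Pt0 M') := by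
  have hne' : i ≠ i' := ne_of_lt hii'
  have hab' : ((i : ℕ) : ℤ) ≤ ((i' : ℕ) : ℤ) := fin_cast_le' hii'.le
  have hiZ : i ∉ Z := Finset.disjoint_left.mp hYZ hiY
  have hi'Z : i' ∉ Z := Finset.disjoint_left.mp hYZ hi'Y
  have hiW : i ∈ Y ∪ Z := Finset.mem_union_left _ hiY
  have hi'W : i' ∈ Y ∪ Z := Finset.mem_union_left _ hi'Y
  have hsa := ssum_erase hiW
  have hsb := ssum_erase hi'W
  have hcard0 : ((Y ∪ Z).erase i).card = ((Y ∪ Z).erase i').card := by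
    rw [Finset.card_erase_of_mem hiW, Finset.card_erase_of_mem hi'W]
  have hiP : i ∉ Z.erase j := fun h => hiZ (Finset.mem_of_mem_erase h)
  have hi'P : i' ∉ Z.erase j := fun h => hi'Z (Finset.mem_of_mem_erase h)
  have hcard2 : (insert i (Z.erase j)).card = (insert i' (Z.erase j)).card := by
    rw [Finset.card_insert_of_notMem hiP, Finset.card_insert_of_notMem hi'P]
  apply SDom_of_rows he M M' h0 h1 h2 h0' h1' h2' hcard0 rfl hcard2
  · intro zc hzc
    have h := TE_le_swap (S := (Y ∪ Z).erase i') (a := i) (b := i')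
      (Finset.mem_erase.mpr ⟨hne', hiW⟩) (Finset.notMem_erase i' _) hii'.le zc
      (by rw [← hcard0]; exact hzc)
    rwa [insert_erase_erase hiW hi'W hne'] at h
  · intro zc _
    rw [hsa, hsb]
    have := mem_le_ssum hi'W
    linarith
  · intro zc hzc
    rw [hsa, hsb, ssum_singleton]
    have h := TE_swap_add (S := insert i' (Z.erase j)) (a := i) (b := i')
      (Finset.mem_insert_self i' _) (by simp [hiP, hne']) hii'.le zc
      (by rw [← hcard2]; exact hzc)
    rw [Finset.erase_insert hi'P] at h
    linarith
  · right; left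
    refine ⟨0, by simp, ?_⟩
    simp only [TE_zero, add_zero]
    rw [hsa, hsb]
    intro hq
    exact fin_cast_ne hne' (by linarith)

/-- Shape for (iii) first claim, `u = 2`: `γ_{k,l+1} ⊳ γ_{k,l}`. -/
lemma shape5 (he : 0 < e) (M M' : Fin 3 → Fin e → Bool) (Y Z : Finset (Fin e))
    (i j j' : Fin e) (hiY : i ∈ Y) (hjZ : j ∈ Z) (hj'Z : j' ∈ Z) (hjj' : j < j')
    (hYZ : Disjoint Y Z)
    (h0 : rowSet M 0 = insert j' (Y.erase i)) (h1 : rowSet M 1 = (Y ∪ Z).erase j')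
    (h2 : rowSet M 2 = {i})
    (h0' : rowSet M' 0 = insert j (Y.erase i)) (h1' : rowSet M' 1 = (Y ∪ Z).erase j)
    (h2' : rowSet M' 2 = {i}) :
    SDom (Pt0 M) (Pt0 M') := by
  have hne' : j ≠ j' := ne_of_lt hjj'
  have hab' : ((j : ℕ) : ℤ) ≤ ((j' : ℕ) : ℤ) := fin_cast_le' hjj'.le
  have hjY : j ∉ Y := Finset.disjoint_right.mp hYZ hjZ
  have hj'Y : j' ∉ Y := Finset.disjoint_right.mp hYZ hj'Z
  have hjP : j ∉ Y.erase i := fun h => hjY (Finset.mem_of_mem_erase h)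
  have hj'P : j' ∉ Y.erase i := fun h => hj'Y (Finset.mem_of_mem_erase h)
  have hjW : j ∈ Y ∪ Z := Finset.mem_union_right _ hjZ
  have hj'W : j' ∈ Y ∪ Z := Finset.mem_union_right _ hj'Z
  have hcard0 : (insert j' (Y.erase i)).card = (insert j (Y.erase i)).card := by
    rw [Finset.card_insert_of_notMem hjP, Finset.card_insert_of_notMem hj'P]
  have hcard1 : ((Y ∪ Z).erase j').card = ((Y ∪ Z).erase j).card := by
    rw [Finset.card_erase_of_mem hjW, Finset.card_erase_of_mem hj'W]
  apply SDom_of_rows he M M' h0 h1 h2 h0' h1' h2' hcard0 hcard1 rfl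
  · intro zc hzc
    have h := TE_le_swap (S := insert j (Y.erase i)) (a := j) (b := j')
      (Finset.mem_insert_self j _) (by simp [hj'P, hne'.symm]) hjj'.le zc
      (by rw [← hcard0]; exact hzc)
    rwa [Finset.erase_insert hjP] at h
  · intro zc hzc
    rw [ssum_insert hjP, ssum_insert hj'P]
    have h := TE_swap_add (S := (Y ∪ Z).erase j) (a := j) (b := j')
      (Finset.mem_erase.mpr ⟨hne'.symm, hj'W⟩) (Finset.notMem_erase j _) hjj'.le zc
      (by rw [← hcard1]; exact hzc)
    rw [insert_erase_erase hj'W hjW hne'.symm] at h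
    linarith
  · intro zc _
    rw [ssum_insert hjP, ssum_insert hj'P, ssum_erase hjW, ssum_erase hj'W]
    apply le_of_eq
    ring
  · left
    refine ⟨(insert j' (Y.erase i)).card, le_rfl, ?_⟩
    have e1 : TE (insert j' (Y.erase i)) (insert j' (Y.erase i)).card
        = ssum (insert j' (Y.erase i)) := TE_card _
    have e2 : TE (insert j (Y.erase i)) (insert j' (Y.erase i)).card
        = ssum (insert j (Y.erase i)) := by rw [hcard0]; exact TE_card _
    rw [e1, e2, ssum_insert hjP, ssum_insert hj'P]
    intro hq
    exact fin_cast_ne hne' (by linarith)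

/-- Shape for (iii) second claim, `u = 2`: `γ_{k,l} ⊳ γ_{k+1,l}`. -/
lemma shape6 (he : 0 < e) (M M' : Fin 3 → Fin e → Bool) (Y Z : Finset (Fin e))
    (i i' j : Fin e) (hiY : i ∈ Y) (hi'Y : i' ∈ Y) (hjZ : j ∈ Z) (hii' : i < i')
    (hYZ : Disjoint Y Z)
    (h0 : rowSet M 0 = insert j (Y.erase i)) (h1 : rowSet M 1 = (Y ∪ Z).erase j)
    (h2 : rowSet M 2 = {i})
    (h0' : rowSet M' 0 = insert j (Y.erase i')) (h1' : rowSet M' 1 = (Y ∪ Z).erase j)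
    (h2' : rowSet M' 2 = {i'}) :
    SDom (Pt0 M) (Pt0 M') := by
  have hne' : i ≠ i' := ne_of_lt hii'
  have hab' : ((i : ℕ) : ℤ) ≤ ((i' : ℕ) : ℤ) := fin_cast_le' hii'.le
  have hjY : j ∉ Y := Finset.disjoint_right.mp hYZ hjZ
  have hij : j ≠ i := fun h => hjY (h ▸ hiY)
  have hij' : j ≠ i' := fun h => hjY (h ▸ hi'Y)
  have hiU : i ∈ insert j Y := Finset.mem_insert_of_mem hiY
  have hi'U : i' ∈ insert j Y := Finset.mem_insert_of_mem hi'Y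
  have hu : ∀ c : Fin e, c ∈ Y → insert j (Y.erase c) = (insert j Y).erase c := by
    intro c hc
    rw [Finset.erase_insert_of_ne (fun h => hjY (by rw [h]; exact hc))]
  have hcard0 : (insert j (Y.erase i)).card = (insert j (Y.erase i')).card := by
    rw [hu i hiY, hu i' hi'Y, Finset.card_erase_of_mem hiU, Finset.card_erase_of_mem hi'U]
  apply SDom_of_rows he M M' h0 h1 h2 h0' h1' h2' hcard0 rfl (by simp)
  · intro zc hzc
    rw [hu i hiY, hu i' hi'Y]
    have h := TE_le_swap (S := (insert j Y).erase i') (a := i) (b := i')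
      (Finset.mem_erase.mpr ⟨hne', hiU⟩) (Finset.notMem_erase i' _) hii'.le zc
      (by
        rw [Finset.card_erase_of_mem hi'U]
        rw [hu i hiY, Finset.card_erase_of_mem hiU] at hzc
        exact hzc)
    rwa [insert_erase_erase hiU hi'U hne'] at h
  · intro zc _
    rw [hu i hiY, hu i' hi'Y, ssum_erase hiU, ssum_erase hi'U]
    linarith
  · intro zc hzc
    have hzc1 : zc ≤ 1 := by simpa using hzc
    rw [hu i hiY, hu i' hi'Y, ssum_erase hiU, ssum_erase hi'U]
    interval_cases zc
    · rw [TE_zero, TE_zero]; linarith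
    · rw [TE_singleton, TE_singleton]; linarith
  · right; right
    refine ⟨0, by simp, ?_⟩
    rw [TE_zero, TE_zero, hu i hiY, hu i' hi'Y, ssum_erase hiU, ssum_erase hi'U]
    intro hq
    exact fin_cast_ne hne' (by linarith)

lemma GZ_le_rows (he : 0 < e) (M M' : Fin 3 → Fin e → Bool)
    {R0 R1 R2 Q0 Q1 Q2 : Finset (Fin e)}
    (h0 : rowSet M 0 = R0) (h1 : rowSet M 1 = R1) (h2 : rowSet M 2 = R2)
    (h0' : rowSet M' 0 = Q0) (h1' : rowSet M' 1 = Q1) (h2' : rowSet M' 2 = Q2)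
    (hc0 : R0.card = Q0.card) (hc1 : R1.card = Q1.card) (hc2 : R2.card = Q2.card)
    (hdom : Dom (Pt0 M) (Pt0 M')) :
    (∀ zc, zc ≤ R0.card → TE Q0 zc ≤ TE R0 zc) ∧
    (∀ zc, zc ≤ R1.card → ssum Q0 + TE Q1 zc ≤ ssum R0 + TE R1 zc) ∧
    (∀ zc, zc ≤ R2.card →
      ssum Q0 + ssum Q1 + TE Q2 zc ≤ ssum R0 + ssum R1 + TE R2 zc) := by
  have hc : ∀ s, (rowSet M s).card = (rowSet M' s).card := by
    intro s
    fin_cases s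
    · show (rowSet M 0).card = (rowSet M' 0).card
      rw [h0, h0']; exact hc0
    · show (rowSet M 1).card = (rowSet M' 1).card
      rw [h1, h1']; exact hc1
    · show (rowSet M 2).card = (rowSet M' 2).card
      rw [h2, h2']; exact hc2
  refine ⟨fun zc hzc => ?_, fun zc hzc => ?_, fun zc hzc => ?_⟩
  · have h := GZ_le_of_Dom he hc hdom 0 zc (by rw [h0]; exact hzc)
    rwa [GZ_zero, GZ_zero, h0, h0'] at h
  · have h := GZ_le_of_Dom he hc hdom 1 zc (by rw [h1]; exact hzc)
    rwa [GZ_one, GZ_one, h0, h1, h0', h1'] at h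
  · have h := GZ_le_of_Dom he hc hdom 2 zc (by rw [h2]; exact hzc)
    rwa [GZ_two, GZ_two, h0, h1, h2, h0', h1', h2'] at h

end Shapes

/-- Dominance relations among the multipartitions of `D^u`
for `u ∈ {2,3}` (here `u : Fin 6` with `u = 1` or `u = 2`). -/
theorem Duset_dominance_relations (e : ℕ) (he : 2 ≤ e)
    (X Y Z : Finset (Fin e)) {y z : ℕ} (hY : Y.card = y + 1) (hZ : Z.card = z + 1)
    (hXY : Disjoint X Y) (hXZ : Disjoint X Z) (hYZ : Disjoint Y Z)
    (hcover : X ∪ Y ∪ Z = Finset.univ)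
    (u : Fin 6) (hu : u = 1 ∨ u = 2) :
    -- (i)
    ((∀ (k : Fin (y + 1)) (hk : k.1 + 1 < y + 1),
        SDom (Pt0 (alphaM Y Z hY u k)) (Pt0 (alphaM Y Z hY u ⟨k.1 + 1, hk⟩))) ∧
      (∀ (l : Fin (z + 1)) (hl : l.1 + 1 < z + 1),
        SDom (Pt0 (betaM Y Z hZ u l)) (Pt0 (betaM Y Z hZ u ⟨l.1 + 1, hl⟩)))) ∧
    -- (ii)
    ((∀ (k : Fin (y + 1)) (l : Fin (z + 1)),
        Y.orderEmbOfFin hY k < Z.orderEmbOfFin hZ l →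
          SDom (Pt0 (alphaM Y Z hY u k)) (Pt0 (betaM Y Z hZ u l))) ∧
      (∀ (k : Fin (y + 1)) (l : Fin (z + 1)),
        Z.orderEmbOfFin hZ l < Y.orderEmbOfFin hY k →
          SDom (Pt0 (betaM Y Z hZ u l)) (Pt0 (alphaM Y Z hY u k)))) ∧
    -- (iii)
    ((∀ (k : Fin (y + 1)) (l : Fin (z + 1)) (hl : l.1 + 1 < z + 1),
        SDom (Pt0 (gammaM Y Z hY hZ u k ⟨l.1 + 1, hl⟩)) (Pt0 (gammaM Y Z hY hZ u k l))) ∧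
      (∀ (k : Fin (y + 1)) (l : Fin (z + 1)) (hk : k.1 + 1 < y + 1),
        SDom (Pt0 (gammaM Y Z hY hZ u k l)) (Pt0 (gammaM Y Z hY hZ u ⟨k.1 + 1, hk⟩ l))) ∧
      (∀ (k k' : Fin (y + 1)) (l l' : Fin (z + 1)),
        Dom (Pt0 (gammaM Y Z hY hZ u k l)) (Pt0 (gammaM Y Z hY hZ u k' l')) → k ≤ k')) ∧
    -- (iv)
    ((∀ (k v : Fin (y + 1)) (l : Fin (z + 1)),
        SDom (Pt0 (gammaM Y Z hY hZ u k l)) (Pt0 (alphaM Y Z hY u v)) → k ≤ v) ∧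
      (∀ (k v : Fin (y + 1)) (l : Fin (z + 1)),
        SDom (Pt0 (alphaM Y Z hY u v)) (Pt0 (gammaM Y Z hY hZ u k l)) → v ≤ k)) ∧
    -- (v)
    ((∀ (k : Fin (y + 1)) (l : Fin (z + 1)),
        SDom (Pt0 (gammaM Y Z hY hZ u k l)) (Pt0 (alphaM Y Z hY u k)) →
          Y.orderEmbOfFin hY k < Z.orderEmbOfFin hZ l) ∧
      (∀ (k : Fin (y + 1)) (l : Fin (z + 1)),
        SDom (Pt0 (alphaM Y Z hY u k)) (Pt0 (gammaM Y Z hY hZ u k l)) →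
          Z.orderEmbOfFin hZ l < Y.orderEmbOfFin hY k)) ∧
    -- (vi)
    ((∀ (k : Fin (y + 1)) (l w : Fin (z + 1)),
        SDom (Pt0 (gammaM Y Z hY hZ u k l)) (Pt0 (betaM Y Z hZ u w)) →
          Y.orderEmbOfFin hY k < Z.orderEmbOfFin hZ w) ∧
      (∀ (k : Fin (y + 1)) (l w : Fin (z + 1)),
        SDom (Pt0 (betaM Y Z hZ u w)) (Pt0 (gammaM Y Z hY hZ u k l)) →
          Z.orderEmbOfFin hZ w < Y.orderEmbOfFin hY k)) := by

  have he0 : 0 < e := by omega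
  have hkY : ∀ kk : Fin (y + 1), Y.orderEmbOfFin hY kk ∈ Y := fun kk =>
    Finset.orderEmbOfFin_mem Y hY kk
  have hlZ : ∀ ll : Fin (z + 1), Z.orderEmbOfFin hZ ll ∈ Z := fun ll =>
    Finset.orderEmbOfFin_mem Z hZ ll
  have hkW : ∀ kk : Fin (y + 1), Y.orderEmbOfFin hY kk ∈ Y ∪ Z := fun kk =>
    Finset.mem_union_left _ (hkY kk)
  have hlW : ∀ ll : Fin (z + 1), Z.orderEmbOfFin hZ ll ∈ Y ∪ Z := fun ll =>
    Finset.mem_union_right _ (hlZ ll)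
  have hkZ : ∀ kk, Y.orderEmbOfFin hY kk ∉ Z := fun kk =>
    Finset.disjoint_left.mp hYZ (hkY kk)
  have hlY : ∀ ll, Z.orderEmbOfFin hZ ll ∉ Y := fun ll =>
    Finset.disjoint_right.mp hYZ (hlZ ll)
  have hkl : ∀ (kk : Fin (y + 1)) (ll : Fin (z + 1)),
      Y.orderEmbOfFin hY kk ≠ Z.orderEmbOfFin hZ ll := fun kk ll h =>
    hkZ kk (by rw [h]; exact hlZ ll)
  have hYmono : ∀ (kk : Fin (y + 1)) (hk : kk.1 + 1 < y + 1),
      Y.orderEmbOfFin hY kk < Y.orderEmbOfFin hY ⟨kk.1 + 1, hk⟩ := fun kk hk =>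
    (Y.orderEmbOfFin hY).strictMono (Fin.lt_def.mpr (Nat.lt_succ_self kk.1))
  have hZmono : ∀ (ll : Fin (z + 1)) (hl : ll.1 + 1 < z + 1),
      Z.orderEmbOfFin hZ ll < Z.orderEmbOfFin hZ ⟨ll.1 + 1, hl⟩ := fun ll hl =>
    (Z.orderEmbOfFin hZ).strictMono (Fin.lt_def.mpr (Nat.lt_succ_self ll.1))
  have hYle : ∀ kk kk' : Fin (y + 1),
      Y.orderEmbOfFin hY kk ≤ Y.orderEmbOfFin hY kk' → kk ≤ kk' := fun _ _ h =>
    (Y.orderEmbOfFin hY).le_iff_le.mp h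
  have cW : ∀ a b : Fin e, a ∈ Y ∪ Z → b ∈ Y ∪ Z →
      ((Y ∪ Z).erase a).card = ((Y ∪ Z).erase b).card := fun a b ha hb => by
    rw [Finset.card_erase_of_mem ha, Finset.card_erase_of_mem hb]
  have hZpos : 0 < Z.card := by rw [hZ]; omega
  have hYpos : 0 < Y.card := by rw [hY]; omega
  have cg2 : ∀ (kk : Fin (y + 1)) (ll : Fin (z + 1)),
      (insert (Y.orderEmbOfFin hY kk) (Z.erase (Z.orderEmbOfFin hZ ll))).card = Z.card := by
    intro kk ll
    rw [Finset.card_insert_of_notMem (fun h => hkZ kk (Finset.mem_of_mem_erase h)),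
      Finset.card_erase_of_mem (hlZ ll)]
    omega
  have cg0 : ∀ (kk : Fin (y + 1)) (ll : Fin (z + 1)),
      (insert (Z.orderEmbOfFin hZ ll) (Y.erase (Y.orderEmbOfFin hY kk))).card = Y.card := by
    intro kk ll
    rw [Finset.card_insert_of_notMem (fun h => hlY ll (Finset.mem_of_mem_erase h)),
      Finset.card_erase_of_mem (hkY kk)]
    omega
  have hlYE : ∀ (kk : Fin (y + 1)) (ll : Fin (z + 1)),
      Z.orderEmbOfFin hZ ll ∉ Y.erase (Y.orderEmbOfFin hY kk) := fun kk ll h =>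
    hlY ll (Finset.mem_of_mem_erase h)
  rcases hu with rfl | rfl
  · refine ⟨⟨fun k hk => ?_, fun l hl => ?_⟩, ⟨fun k l hlt => ?_, fun k l hlt => ?_⟩,
      ⟨fun k l hl => ?_, fun k l hk => ?_, fun k k' l l' hdom => ?_⟩,
      ⟨fun k v l hsd => ?_, fun k v l hsd => ?_⟩,
      ⟨fun k l hsd => ?_, fun k l hsd => ?_⟩,
      ⟨fun k l w hsd => ?_, fun k l w hsd => ?_⟩⟩
    -- (i) alpha
    · exact shape1 he0 _ _ (Y ∪ Z) Z _ _ (hkW k) (hkW ⟨k.1 + 1, hk⟩) (hYmono k hk)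
        (rowSet_alpha_1_0 Y Z hY hYZ k) (rowSet_alpha_1_1 Y Z hY hYZ k) (rowSet_alpha_1_2 Y Z hY hYZ k) (rowSet_alpha_1_0 Y Z hY hYZ ⟨k.1 + 1, hk⟩) (rowSet_alpha_1_1 Y Z hY hYZ ⟨k.1 + 1, hk⟩) (rowSet_alpha_1_2 Y Z hY hYZ ⟨k.1 + 1, hk⟩)
    -- (i) beta
    · exact shape1 he0 _ _ (Y ∪ Z) Z _ _ (hlW l) (hlW ⟨l.1 + 1, hl⟩) (hZmono l hl)
        (rowSet_beta_1_0 Y Z hZ hYZ l) (rowSet_beta_1_1 Y Z hZ hYZ l) (rowSet_beta_1_2 Y Z hZ hYZ l) (rowSet_beta_1_0 Y Z hZ hYZ ⟨l.1 + 1, hl⟩) (rowSet_beta_1_1 Y Z hZ hYZ ⟨l.1 + 1, hl⟩) (rowSet_beta_1_2 Y Z hZ hYZ ⟨l.1 + 1, hl⟩)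
    -- (ii) alpha < beta
    · exact shape1 he0 _ _ (Y ∪ Z) Z _ _ (hkW k) (hlW l) hlt
        (rowSet_alpha_1_0 Y Z hY hYZ k) (rowSet_alpha_1_1 Y Z hY hYZ k) (rowSet_alpha_1_2 Y Z hY hYZ k) (rowSet_beta_1_0 Y Z hZ hYZ l) (rowSet_beta_1_1 Y Z hZ hYZ l) (rowSet_beta_1_2 Y Z hZ hYZ l)
    -- (ii) beta < alpha
    · exact shape1 he0 _ _ (Y ∪ Z) Z _ _ (hlW l) (hkW k) hlt
        (rowSet_beta_1_0 Y Z hZ hYZ l) (rowSet_beta_1_1 Y Z hZ hYZ l) (rowSet_beta_1_2 Y Z hZ hYZ l) (rowSet_alpha_1_0 Y Z hY hYZ k) (rowSet_alpha_1_1 Y Z hY hYZ k) (rowSet_alpha_1_2 Y Z hY hYZ k)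
    -- (iii) gamma l
    · exact shape3 he0 _ _ Y Z (Y.orderEmbOfFin hY k) (Z.orderEmbOfFin hZ l) (Z.orderEmbOfFin hZ ⟨l.1 + 1, hl⟩)
        (hkY k) (hlZ l) (hlZ ⟨l.1 + 1, hl⟩) (hZmono l hl) hYZ
        (rowSet_gamma_1_0 Y Z hY hZ hYZ k ⟨l.1 + 1, hl⟩) (rowSet_gamma_1_1 Y Z hY hZ hYZ k ⟨l.1 + 1, hl⟩) (rowSet_gamma_1_2 Y Z hY hZ hYZ k ⟨l.1 + 1, hl⟩) (rowSet_gamma_1_0 Y Z hY hZ hYZ k l) (rowSet_gamma_1_1 Y Z hY hZ hYZ k l) (rowSet_gamma_1_2 Y Z hY hZ hYZ k l)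
    -- (iii) gamma k
    · exact shape4 he0 _ _ Y Z (Y.orderEmbOfFin hY k) (Y.orderEmbOfFin hY ⟨k.1 + 1, hk⟩) (Z.orderEmbOfFin hZ l)
        (hkY k) (hkY ⟨k.1 + 1, hk⟩) (hlZ l) (hYmono k hk) hYZ
        (rowSet_gamma_1_0 Y Z hY hZ hYZ k l) (rowSet_gamma_1_1 Y Z hY hZ hYZ k l) (rowSet_gamma_1_2 Y Z hY hZ hYZ k l) (rowSet_gamma_1_0 Y Z hY hZ hYZ ⟨k.1 + 1, hk⟩ l) (rowSet_gamma_1_1 Y Z hY hZ hYZ ⟨k.1 + 1, hk⟩ l) (rowSet_gamma_1_2 Y Z hY hZ hYZ ⟨k.1 + 1, hk⟩ l)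
    -- (iii) gamma Dom implies k ≤ k'
    · have h := (GZ_le_rows he0 _ _ (rowSet_gamma_1_0 Y Z hY hZ hYZ k l) (rowSet_gamma_1_1 Y Z hY hZ hYZ k l) (rowSet_gamma_1_2 Y Z hY hZ hYZ k l) (rowSet_gamma_1_0 Y Z hY hZ hYZ k' l') (rowSet_gamma_1_1 Y Z hY hZ hYZ k' l') (rowSet_gamma_1_2 Y Z hY hZ hYZ k' l')
        (cW _ _ (hkW k) (hkW k')) (by simp) (by rw [cg2 k l, cg2 k' l']) hdom).2.1 0
        (Nat.zero_le _)
      simp only [TE_zero, add_zero] at h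
      rw [ssum_erase (hkW k), ssum_erase (hkW k')] at h
      exact hYle k k' (fin_cast_le (by linarith))
    -- (iv) gamma > alpha implies k ≤ v
    · have h := (GZ_le_rows he0 _ _ (rowSet_gamma_1_0 Y Z hY hZ hYZ k l) (rowSet_gamma_1_1 Y Z hY hZ hYZ k l) (rowSet_gamma_1_2 Y Z hY hZ hYZ k l) (rowSet_alpha_1_0 Y Z hY hYZ v) (rowSet_alpha_1_1 Y Z hY hYZ v) (rowSet_alpha_1_2 Y Z hY hYZ v)
        (cW _ _ (hkW k) (hkW v)) (by simp) (cg2 k l) hsd.1).2.1 0 (Nat.zero_le _)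
      simp only [TE_zero, add_zero] at h
      rw [ssum_erase (hkW k), ssum_erase (hkW v)] at h
      exact hYle k v (fin_cast_le (by linarith))
    -- (iv) alpha > gamma implies v ≤ k
    · have h := (GZ_le_rows he0 _ _ (rowSet_alpha_1_0 Y Z hY hYZ v) (rowSet_alpha_1_1 Y Z hY hYZ v) (rowSet_alpha_1_2 Y Z hY hYZ v) (rowSet_gamma_1_0 Y Z hY hZ hYZ k l) (rowSet_gamma_1_1 Y Z hY hZ hYZ k l) (rowSet_gamma_1_2 Y Z hY hZ hYZ k l)
        (cW _ _ (hkW v) (hkW k)) (by simp) (cg2 k l).symm hsd.1).2.1 0 (Nat.zero_le _)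
      simp only [TE_zero, add_zero] at h
      rw [ssum_erase (hkW k), ssum_erase (hkW v)] at h
      exact hYle v k (fin_cast_le (by linarith))
    -- (v) gamma > alpha_k implies i_k < j_l
    · have h := (GZ_le_rows he0 _ _ (rowSet_gamma_1_0 Y Z hY hZ hYZ k l) (rowSet_gamma_1_1 Y Z hY hZ hYZ k l) (rowSet_gamma_1_2 Y Z hY hZ hYZ k l) (rowSet_alpha_1_0 Y Z hY hYZ k) (rowSet_alpha_1_1 Y Z hY hYZ k) (rowSet_alpha_1_2 Y Z hY hYZ k)
        (cW _ _ (hkW k) (hkW k)) (by simp) (cg2 k l) hsd.1).2.1 1 (by simp)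
      rw [TE_singleton, TE_singleton] at h
      exact lt_of_le_of_ne (fin_cast_le (by linarith)) (hkl k l)
    -- (v) alpha_k > gamma implies j_l < i_k
    · have h := (GZ_le_rows he0 _ _ (rowSet_alpha_1_0 Y Z hY hYZ k) (rowSet_alpha_1_1 Y Z hY hYZ k) (rowSet_alpha_1_2 Y Z hY hYZ k) (rowSet_gamma_1_0 Y Z hY hZ hYZ k l) (rowSet_gamma_1_1 Y Z hY hZ hYZ k l) (rowSet_gamma_1_2 Y Z hY hZ hYZ k l)
        (cW _ _ (hkW k) (hkW k)) (by simp) (cg2 k l).symm hsd.1).2.1 1 (by simp)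
      rw [TE_singleton, TE_singleton] at h
      exact lt_of_le_of_ne (fin_cast_le (by linarith)) (Ne.symm (hkl k l))
    -- (vi) gamma > beta_w implies i_k < j_w
    · have h := (GZ_le_rows he0 _ _ (rowSet_gamma_1_0 Y Z hY hZ hYZ k l) (rowSet_gamma_1_1 Y Z hY hZ hYZ k l) (rowSet_gamma_1_2 Y Z hY hZ hYZ k l) (rowSet_beta_1_0 Y Z hZ hYZ w) (rowSet_beta_1_1 Y Z hZ hYZ w) (rowSet_beta_1_2 Y Z hZ hYZ w)
        (cW _ _ (hkW k) (hlW w)) (by simp) (cg2 k l) hsd.1).2.1 0 (Nat.zero_le _)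
      simp only [TE_zero, add_zero] at h
      rw [ssum_erase (hkW k), ssum_erase (hlW w)] at h
      exact lt_of_le_of_ne (fin_cast_le (by linarith)) (hkl k w)
    -- (vi) beta_w > gamma implies j_w < i_k
    · have h := (GZ_le_rows he0 _ _ (rowSet_beta_1_0 Y Z hZ hYZ w) (rowSet_beta_1_1 Y Z hZ hYZ w) (rowSet_beta_1_2 Y Z hZ hYZ w) (rowSet_gamma_1_0 Y Z hY hZ hYZ k l) (rowSet_gamma_1_1 Y Z hY hZ hYZ k l) (rowSet_gamma_1_2 Y Z hY hZ hYZ k l)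
        (cW _ _ (hlW w) (hkW k)) (by simp) (cg2 k l).symm hsd.1).2.1 0 (Nat.zero_le _)
      simp only [TE_zero, add_zero] at h
      rw [ssum_erase (hkW k), ssum_erase (hlW w)] at h
      exact lt_of_le_of_ne (fin_cast_le (by linarith)) (Ne.symm (hkl k w))
  · refine ⟨⟨fun k hk => ?_, fun l hl => ?_⟩, ⟨fun k l hlt => ?_, fun k l hlt => ?_⟩,
      ⟨fun k l hl => ?_, fun k l hk => ?_, fun k k' l l' hdom => ?_⟩,
      ⟨fun k v l hsd => ?_, fun k v l hsd => ?_⟩,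
      ⟨fun k l hsd => ?_, fun k l hsd => ?_⟩,
      ⟨fun k l w hsd => ?_, fun k l w hsd => ?_⟩⟩
    -- (i) alpha
    · exact shape2 he0 _ _ (Y ∪ Z) Y _ _ (hkW k) (hkW ⟨k.1 + 1, hk⟩) (hYmono k hk)
        (rowSet_alpha_2_0 Y Z hY hYZ k) (rowSet_alpha_2_1 Y Z hY hYZ k) (rowSet_alpha_2_2 Y Z hY hYZ k) (rowSet_alpha_2_0 Y Z hY hYZ ⟨k.1 + 1, hk⟩) (rowSet_alpha_2_1 Y Z hY hYZ ⟨k.1 + 1, hk⟩) (rowSet_alpha_2_2 Y Z hY hYZ ⟨k.1 + 1, hk⟩)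
    -- (i) beta
    · exact shape2 he0 _ _ (Y ∪ Z) Y _ _ (hlW l) (hlW ⟨l.1 + 1, hl⟩) (hZmono l hl)
        (rowSet_beta_2_0 Y Z hZ hYZ l) (rowSet_beta_2_1 Y Z hZ hYZ l) (rowSet_beta_2_2 Y Z hZ hYZ l) (rowSet_beta_2_0 Y Z hZ hYZ ⟨l.1 + 1, hl⟩) (rowSet_beta_2_1 Y Z hZ hYZ ⟨l.1 + 1, hl⟩) (rowSet_beta_2_2 Y Z hZ hYZ ⟨l.1 + 1, hl⟩)
    -- (ii) alpha < beta
    · exact shape2 he0 _ _ (Y ∪ Z) Y _ _ (hkW k) (hlW l) hlt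
        (rowSet_alpha_2_0 Y Z hY hYZ k) (rowSet_alpha_2_1 Y Z hY hYZ k) (rowSet_alpha_2_2 Y Z hY hYZ k) (rowSet_beta_2_0 Y Z hZ hYZ l) (rowSet_beta_2_1 Y Z hZ hYZ l) (rowSet_beta_2_2 Y Z hZ hYZ l)
    -- (ii) beta < alpha
    · exact shape2 he0 _ _ (Y ∪ Z) Y _ _ (hlW l) (hkW k) hlt
        (rowSet_beta_2_0 Y Z hZ hYZ l) (rowSet_beta_2_1 Y Z hZ hYZ l) (rowSet_beta_2_2 Y Z hZ hYZ l) (rowSet_alpha_2_0 Y Z hY hYZ k) (rowSet_alpha_2_1 Y Z hY hYZ k) (rowSet_alpha_2_2 Y Z hY hYZ k)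
    -- (iii) gamma l
    · exact shape5 he0 _ _ Y Z (Y.orderEmbOfFin hY k) (Z.orderEmbOfFin hZ l) (Z.orderEmbOfFin hZ ⟨l.1 + 1, hl⟩)
        (hkY k) (hlZ l) (hlZ ⟨l.1 + 1, hl⟩) (hZmono l hl) hYZ
        (rowSet_gamma_2_0 Y Z hY hZ hYZ k ⟨l.1 + 1, hl⟩) (rowSet_gamma_2_1 Y Z hY hZ hYZ k ⟨l.1 + 1, hl⟩) (rowSet_gamma_2_2 Y Z hY hZ hYZ k ⟨l.1 + 1, hl⟩) (rowSet_gamma_2_0 Y Z hY hZ hYZ k l) (rowSet_gamma_2_1 Y Z hY hZ hYZ k l) (rowSet_gamma_2_2 Y Z hY hZ hYZ k l)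
    -- (iii) gamma k
    · exact shape6 he0 _ _ Y Z (Y.orderEmbOfFin hY k) (Y.orderEmbOfFin hY ⟨k.1 + 1, hk⟩) (Z.orderEmbOfFin hZ l)
        (hkY k) (hkY ⟨k.1 + 1, hk⟩) (hlZ l) (hYmono k hk) hYZ
        (rowSet_gamma_2_0 Y Z hY hZ hYZ k l) (rowSet_gamma_2_1 Y Z hY hZ hYZ k l) (rowSet_gamma_2_2 Y Z hY hZ hYZ k l) (rowSet_gamma_2_0 Y Z hY hZ hYZ ⟨k.1 + 1, hk⟩ l) (rowSet_gamma_2_1 Y Z hY hZ hYZ ⟨k.1 + 1, hk⟩ l) (rowSet_gamma_2_2 Y Z hY hZ hYZ ⟨k.1 + 1, hk⟩ l)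
    -- (iii) gamma Dom implies k ≤ k'
    · have h := (GZ_le_rows he0 _ _ (rowSet_gamma_2_0 Y Z hY hZ hYZ k l) (rowSet_gamma_2_1 Y Z hY hZ hYZ k l) (rowSet_gamma_2_2 Y Z hY hZ hYZ k l) (rowSet_gamma_2_0 Y Z hY hZ hYZ k' l') (rowSet_gamma_2_1 Y Z hY hZ hYZ k' l') (rowSet_gamma_2_2 Y Z hY hZ hYZ k' l')
        (by rw [cg0 k l, cg0 k' l']) (cW _ _ (hlW l) (hlW l')) (by simp) hdom).2.2 0
        (Nat.zero_le _)
      simp only [TE_zero, add_zero] at h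
      rw [ssum_insert (hlYE k l), ssum_insert (hlYE k' l'), ssum_erase (hkY k),
        ssum_erase (hkY k'), ssum_erase (hlW l), ssum_erase (hlW l')] at h
      exact hYle k k' (fin_cast_le (by linarith))
    -- (iv) gamma > alpha implies k ≤ v
    · have h := (GZ_le_rows he0 _ _ (rowSet_gamma_2_0 Y Z hY hZ hYZ k l) (rowSet_gamma_2_1 Y Z hY hZ hYZ k l) (rowSet_gamma_2_2 Y Z hY hZ hYZ k l) (rowSet_alpha_2_0 Y Z hY hYZ v) (rowSet_alpha_2_1 Y Z hY hYZ v) (rowSet_alpha_2_2 Y Z hY hYZ v)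
        (cg0 k l) (cW _ _ (hlW l) (hkW v)) (by simp) hsd.1).2.2 0 (Nat.zero_le _)
      simp only [TE_zero, add_zero] at h
      rw [ssum_insert (hlYE k l), ssum_erase (hkY k), ssum_erase (hlW l),
        ssum_erase (hkW v)] at h
      exact hYle k v (fin_cast_le (by linarith))
    -- (iv) alpha > gamma implies v ≤ k
    · have h := (GZ_le_rows he0 _ _ (rowSet_alpha_2_0 Y Z hY hYZ v) (rowSet_alpha_2_1 Y Z hY hYZ v) (rowSet_alpha_2_2 Y Z hY hYZ v) (rowSet_gamma_2_0 Y Z hY hZ hYZ k l) (rowSet_gamma_2_1 Y Z hY hZ hYZ k l) (rowSet_gamma_2_2 Y Z hY hZ hYZ k l)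
        (cg0 k l).symm (cW _ _ (hkW v) (hlW l)) (by simp) hsd.1).2.2 0 (Nat.zero_le _)
      simp only [TE_zero, add_zero] at h
      rw [ssum_insert (hlYE k l), ssum_erase (hkY k), ssum_erase (hlW l),
        ssum_erase (hkW v)] at h
      exact hYle v k (fin_cast_le (by linarith))
    -- (v) gamma > alpha_k implies i_k < j_l
    · have h := (GZ_le_rows he0 _ _ (rowSet_gamma_2_0 Y Z hY hZ hYZ k l) (rowSet_gamma_2_1 Y Z hY hZ hYZ k l) (rowSet_gamma_2_2 Y Z hY hZ hYZ k l) (rowSet_alpha_2_0 Y Z hY hYZ k) (rowSet_alpha_2_1 Y Z hY hYZ k) (rowSet_alpha_2_2 Y Z hY hYZ k)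
        (cg0 k l) (cW _ _ (hlW l) (hkW k)) (by simp) hsd.1).1 Y.card
        (le_of_eq (cg0 k l).symm)
      have e2 : TE (insert (Z.orderEmbOfFin hZ l) (Y.erase (Y.orderEmbOfFin hY k))) Y.card
          = ssum (insert (Z.orderEmbOfFin hZ l) (Y.erase (Y.orderEmbOfFin hY k))) := by
        conv_lhs => rw [show Y.card = (insert (Z.orderEmbOfFin hZ l) (Y.erase (Y.orderEmbOfFin hY k))).card from
          (cg0 k l).symm]
        exact TE_card _
      rw [TE_card, e2, ssum_insert (hlYE k l), ssum_erase (hkY k)] at h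
      exact lt_of_le_of_ne (fin_cast_le (by linarith)) (hkl k l)
    -- (v) alpha_k > gamma implies j_l < i_k
    · have h := (GZ_le_rows he0 _ _ (rowSet_alpha_2_0 Y Z hY hYZ k) (rowSet_alpha_2_1 Y Z hY hYZ k) (rowSet_alpha_2_2 Y Z hY hYZ k) (rowSet_gamma_2_0 Y Z hY hZ hYZ k l) (rowSet_gamma_2_1 Y Z hY hZ hYZ k l) (rowSet_gamma_2_2 Y Z hY hZ hYZ k l)
        (cg0 k l).symm (cW _ _ (hkW k) (hlW l)) (by simp) hsd.1).1 Y.card le_rfl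
      have e2 : TE (insert (Z.orderEmbOfFin hZ l) (Y.erase (Y.orderEmbOfFin hY k))) Y.card
          = ssum (insert (Z.orderEmbOfFin hZ l) (Y.erase (Y.orderEmbOfFin hY k))) := by
        conv_lhs => rw [show Y.card = (insert (Z.orderEmbOfFin hZ l) (Y.erase (Y.orderEmbOfFin hY k))).card from
          (cg0 k l).symm]
        exact TE_card _
      rw [TE_card, e2, ssum_insert (hlYE k l), ssum_erase (hkY k)] at h
      exact lt_of_le_of_ne (fin_cast_le (by linarith)) (Ne.symm (hkl k l))
    -- (vi) gamma > beta_w implies i_k < j_w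
    · have h := (GZ_le_rows he0 _ _ (rowSet_gamma_2_0 Y Z hY hZ hYZ k l) (rowSet_gamma_2_1 Y Z hY hZ hYZ k l) (rowSet_gamma_2_2 Y Z hY hZ hYZ k l) (rowSet_beta_2_0 Y Z hZ hYZ w) (rowSet_beta_2_1 Y Z hZ hYZ w) (rowSet_beta_2_2 Y Z hZ hYZ w)
        (cg0 k l) (cW _ _ (hlW l) (hlW w)) (by simp) hsd.1).2.2 0 (Nat.zero_le _)
      simp only [TE_zero, add_zero] at h
      rw [ssum_insert (hlYE k l), ssum_erase (hkY k), ssum_erase (hlW l),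
        ssum_erase (hlW w)] at h
      exact lt_of_le_of_ne (fin_cast_le (by linarith)) (hkl k w)
    -- (vi) beta_w > gamma implies j_w < i_k
    · have h := (GZ_le_rows he0 _ _ (rowSet_beta_2_0 Y Z hZ hYZ w) (rowSet_beta_2_1 Y Z hZ hYZ w) (rowSet_beta_2_2 Y Z hZ hYZ w) (rowSet_gamma_2_0 Y Z hY hZ hYZ k l) (rowSet_gamma_2_1 Y Z hY hZ hYZ k l) (rowSet_gamma_2_2 Y Z hY hZ hYZ k l)
        (cg0 k l).symm (cW _ _ (hlW w) (hlW l)) (by simp) hsd.1).2.2 0 (Nat.zero_le _)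
      simp only [TE_zero, add_zero] at h
      rw [ssum_insert (hlYE k l), ssum_erase (hkY k), ssum_erase (hlW l),
        ssum_erase (hlW w)] at h
      exact lt_of_le_of_ne (fin_cast_le (by linarith)) (Ne.symm (hkl k w))



end
end AK
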